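/- arXiv:1802.04139 — 2 statements merged into one kernel-verified Lean document; each statement's English description precedes it below -/
import Mathlib

section
/- Set s₀ := ⌊(ν+d)/2⌋ + 1. For every s ≥ s₀ there exists a constant C(s) such that for all subsets B, C ⊆ ℤ^ν × (ℤ^d \ {0}), every matrix M ∈ ℳ^B_C with |M|_s < ∞, and every family h = (h_{k'})_{k'∈B} of complex numbers with ‖h‖_s² := Σ_{k'∈B} ⟨k'⟩^{2s}|h_{k'}|² < ∞, the vector Mh defined by (Mh)_k = Σ_{k'∈B} M_k^{k'} h_{k'} (the sums converging absolutely) satisfies ‖Mh‖_s ≤ C(s)( |M|_{s₀} ‖h‖_s + |M|_s ‖h‖_{s₀} ). -/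
open scoped BigOperators ENNReal NNReal

noncomputable section

/-- The index set `ℤ^ν × ℤ^d`. -/
abbrev Idx (ν d : ℕ) := (Fin ν → ℤ) × (Fin d → ℤ)

/-- `s₀ := ⌊(ν+d)/2⌋ + 1`. -/
def s0 (n : ℕ) : ℕ := n / 2 + 1

/-- `⟨k⟩ = max(1,|k|)` for `k ∈ ℤ^ν × ℤ^d`. -/
def japIdx {ν d : ℕ} (k : Idx ν d) : ℝ :=
  max 1 (Real.sqrt (∑ i, ((k.1 i : ℝ)) ^ 2 + ∑ i, ((k.2 i : ℝ)) ^ 2))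

/-- `[M(k)]`: the sup of moduli of entries of `M` (seen as a matrix with rows in `C` and
columns in `B`) on the `k`-th diagonal. -/
def entrySup {ν d : ℕ} (B C : Set (Idx ν d)) (M : Idx ν d → Idx ν d → ℂ) (k : Idx ν d) :
    ℝ≥0∞ :=
  ⨆ (p : Idx ν d × Idx ν d) (_ : p.1 ∈ C ∧ p.2 ∈ B ∧ p.1 - p.2 = k), (‖M p.1 p.2‖₊ : ℝ≥0∞)

/-- The `s`-decay norm of a matrix with columns indexed by `B` and rows indexed by `C`. -/
def decayNorm {ν d : ℕ} (B C : Set (Idx ν d)) (s : ℝ) (M : Idx ν d → Idx ν d → ℂ) : ℝ≥0∞ :=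
  (∑' k : Idx ν d, ENNReal.ofReal (japIdx k ^ (2 * s)) * (entrySup B C M k) ^ 2) ^ (1/2 : ℝ)

/-- Product of matrices, contracting over the index set `C`. -/
def matMulOn {ν d : ℕ} (C : Set (Idx ν d)) (M N : Idx ν d → Idx ν d → ℂ) :
    Idx ν d → Idx ν d → ℂ :=
  fun k k' => ∑' c : C, M k (c : Idx ν d) * N (c : Idx ν d) k'

/-- The weighted `ℓ²` norm `‖h‖_s` of a family indexed by `B ⊆ ℤ^ν × ℤ^d_*`. -/
def vecNorm {ν d : ℕ} (B : Set (Idx ν d)) (s : ℝ) (h : Idx ν d → ℂ) : ℝ≥0∞ :=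
  (∑' k : B, ENNReal.ofReal (japIdx (k : Idx ν d) ^ (2 * s)) * (‖h (k : Idx ν d)‖₊ : ℝ≥0∞) ^ 2)
    ^ (1/2 : ℝ)



lemma my_sq_rpow_half (x : ℝ≥0∞) : (x ^ (1/2:ℝ)) ^ 2 = x := by
  rw [← ENNReal.rpow_natCast (x ^ (1/2:ℝ)) 2, ← ENNReal.rpow_mul]
  norm_num

lemma my_pow_two_rpow_half (x : ℝ≥0∞) : (x ^ 2) ^ (1/2:ℝ) = x := by
  rw [← ENNReal.rpow_natCast x 2, ← ENNReal.rpow_mul]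
  norm_num

/-- Cauchy–Schwarz for `ENNReal`-valued tsums. -/
lemma my_tsum_CS {ι : Type*} [Countable ι] (f g : ι → ℝ≥0∞) :
    (∑' i, f i * g i) ≤ (∑' i, f i ^ 2) ^ (1/2:ℝ) * (∑' i, g i ^ 2) ^ (1/2:ℝ) := by
  letI : MeasurableSpace ι := ⊤
  haveI : MeasurableSingletonClass ι := ⟨fun _ => MeasurableSpace.measurableSet_top⟩
  have hmf : AEMeasurable f (MeasureTheory.Measure.count) := measurable_from_top.aemeasurable
  have hmg : AEMeasurable g (MeasureTheory.Measure.count) := measurable_from_top.aemeasurable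
  have hconj : Real.HolderConjugate 2 2 := by
    rw [Real.holderConjugate_iff]; norm_num
  have h := ENNReal.lintegral_mul_le_Lp_mul_Lq (MeasureTheory.Measure.count) hconj hmf hmg
  simp only [MeasureTheory.lintegral_count, Pi.mul_apply] at h
  calc (∑' i, f i * g i) ≤ (∑' i, f i ^ (2:ℝ)) ^ (1/2:ℝ) * (∑' i, g i ^ (2:ℝ)) ^ (1/2:ℝ) := h
  _ = (∑' i, f i ^ 2) ^ (1/2:ℝ) * (∑' i, g i ^ 2) ^ (1/2:ℝ) := by
      congr 2 <;> exact tsum_congr fun i => by rw [← ENNReal.rpow_natCast]; norm_num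

/-- triangle inequality for the `ℓ²` sum. -/
lemma my_l2_add {ι : Type*} [Countable ι] (f g : ι → ℝ≥0∞) :
    (∑' i, (f i + g i) ^ 2) ^ (1/2:ℝ) ≤ (∑' i, f i ^ 2) ^ (1/2:ℝ) + (∑' i, g i ^ 2) ^ (1/2:ℝ) := by
  letI : MeasurableSpace ι := ⊤
  haveI : MeasurableSingletonClass ι := ⟨fun _ => MeasurableSpace.measurableSet_top⟩
  have hmf : AEMeasurable f (MeasureTheory.Measure.count) := measurable_from_top.aemeasurable
  have hmg : AEMeasurable g (MeasureTheory.Measure.count) := measurable_from_top.aemeasurable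
  have h := ENNReal.lintegral_Lp_add_le hmf hmg (by norm_num : (1:ℝ) ≤ 2)
  simp only [MeasureTheory.lintegral_count, Pi.add_apply] at h
  have e2 : ∀ u : ι → ℝ≥0∞, (∑' i, u i ^ (2:ℝ)) = ∑' i, u i ^ 2 := fun u =>
    tsum_congr fun i => by rw [← ENNReal.rpow_natCast]; norm_num
  rw [e2, e2, e2] at h
  exact h

/-- Young's inequality `‖f ⋆ g‖₂ ≤ ‖f‖₁ ‖g‖₂` for `ENNReal`-valued functions on a
countable additive group. -/
lemma my_young {G : Type*} [AddCommGroup G] [Countable G] (f g : G → ℝ≥0∞) :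
    (∑' k, (∑' j, f (k - j) * g j) ^ 2) ^ (1/2:ℝ)
      ≤ (∑' j, f j) * (∑' j, g j ^ 2) ^ (1/2:ℝ) := by
  set F := ∑' j, f j with hF
  have htrans : ∀ k : G, (∑' j, f (k - j)) = F := fun k => (Equiv.subLeft k).tsum_eq f
  have htrans' : ∀ j : G, (∑' k, f (k - j)) = F := fun j => (Equiv.subRight j).tsum_eq f
  have hk : ∀ k : G, (∑' j, f (k - j) * g j) ^ 2 ≤ F * ∑' j, f (k - j) * g j ^ 2 := by
    intro k
    have hcs := my_tsum_CS (fun j => f (k - j) ^ (1/2:ℝ))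
      (fun j => f (k - j) ^ (1/2:ℝ) * g j)
    have h1 : (∑' j, f (k - j) ^ (1/2:ℝ) * (f (k - j) ^ (1/2:ℝ) * g j))
        = ∑' j, f (k - j) * g j := by
      refine tsum_congr fun j => ?_
      rw [← mul_assoc, ← sq, my_sq_rpow_half]
    have h2 : (∑' j, (f (k - j) ^ (1/2:ℝ)) ^ 2) = F := by
      rw [← htrans k]; exact tsum_congr fun j => my_sq_rpow_half _
    have h3 : (∑' j, (f (k - j) ^ (1/2:ℝ) * g j) ^ 2) = ∑' j, f (k - j) * g j ^ 2 :=
      tsum_congr fun j => by rw [mul_pow, my_sq_rpow_half]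
    rw [h1, h2, h3] at hcs
    calc (∑' j, f (k - j) * g j) ^ 2
        ≤ (F ^ (1/2:ℝ) * (∑' j, f (k - j) * g j ^ 2) ^ (1/2:ℝ)) ^ 2 := by
          exact pow_le_pow_left' hcs 2
      _ = F * ∑' j, f (k - j) * g j ^ 2 := by
          rw [mul_pow, my_sq_rpow_half, my_sq_rpow_half]
  have hsum : (∑' k, (∑' j, f (k - j) * g j) ^ 2) ≤ F ^ 2 * ∑' j, g j ^ 2 := by
    calc (∑' k, (∑' j, f (k - j) * g j) ^ 2)
        ≤ ∑' k, F * ∑' j, f (k - j) * g j ^ 2 := ENNReal.tsum_le_tsum hk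
      _ = F * ∑' k, ∑' j, f (k - j) * g j ^ 2 := ENNReal.tsum_mul_left
      _ = F * ∑' j, ∑' k, f (k - j) * g j ^ 2 := by rw [ENNReal.tsum_comm]
      _ = F * ∑' j, (∑' k, f (k - j)) * g j ^ 2 := by
          congr 1; exact tsum_congr fun j => ENNReal.tsum_mul_right
      _ = F * ∑' j, F * g j ^ 2 := by
          congr 1; exact tsum_congr fun j => by rw [htrans' j]
      _ = F ^ 2 * ∑' j, g j ^ 2 := by rw [ENNReal.tsum_mul_left, ← mul_assoc, sq]
  calc (∑' k, (∑' j, f (k - j) * g j) ^ 2) ^ (1/2:ℝ)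
      ≤ (F ^ 2 * ∑' j, g j ^ 2) ^ (1/2:ℝ) := ENNReal.rpow_le_rpow hsum (by norm_num)
    _ = F * (∑' j, g j ^ 2) ^ (1/2:ℝ) := by
        rw [ENNReal.mul_rpow_of_nonneg _ _ (by norm_num : (0:ℝ) ≤ 1/2), my_pow_two_rpow_half]

section JapLemmas
variable {ν d : ℕ}

lemma my_one_le_jap (k : Idx ν d) : 1 ≤ japIdx k := le_max_left _ _

lemma my_jap_pos (k : Idx ν d) : 0 < japIdx k := lt_of_lt_of_le one_pos (my_one_le_jap k)

def vmap (k : Idx ν d) : EuclideanSpace ℝ (Fin ν ⊕ Fin d) :=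
  (WithLp.equiv 2 _).symm (Sum.elim (fun i => ((k.1 i : ℝ))) (fun i => ((k.2 i : ℝ))))

lemma my_vmap_add (a b : Idx ν d) : vmap (a + b) = vmap a + vmap b := by
  ext i
  cases i <;> simp [vmap, WithLp.equiv_symm_apply, PiLp.toLp_apply] <;> push_cast <;> ring

lemma my_jap_eq (k : Idx ν d) : japIdx k = max 1 ‖vmap k‖ := by
  have : ‖vmap k‖ = Real.sqrt (∑ i, ((k.1 i : ℝ)) ^ 2 + ∑ i, ((k.2 i : ℝ)) ^ 2) := by
    rw [EuclideanSpace.norm_eq]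
    congr 1
    rw [Fintype.sum_sum_type]
    congr 1 <;> exact Finset.sum_congr rfl fun i _ => by
      simp [vmap, WithLp.equiv_symm_apply, PiLp.toLp_apply, Real.norm_eq_abs, sq_abs]
  rw [japIdx, this]

lemma my_jap_add (a b : Idx ν d) : japIdx (a + b) ≤ japIdx a + japIdx b := by
  rw [my_jap_eq, my_jap_eq, my_jap_eq, my_vmap_add]
  have h1 : (1:ℝ) ≤ max 1 ‖vmap a‖ + max 1 ‖vmap b‖ :=
    le_add_of_le_of_nonneg (le_max_left _ _) (le_trans zero_le_one (le_max_left _ _))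
  refine max_le h1 ?_
  calc ‖vmap a + vmap b‖ ≤ ‖vmap a‖ + ‖vmap b‖ := norm_add_le _ _
    _ ≤ max 1 ‖vmap a‖ + max 1 ‖vmap b‖ := add_le_add (le_max_right _ _) (le_max_right _ _)

lemma my_coord_le_jap1 (k : Idx ν d) (i : Fin ν) : max 1 |((k.1 i : ℝ))| ≤ japIdx k := by
  refine max_le (my_one_le_jap k) (le_max_of_le_right ?_)
  rw [← Real.sqrt_sq_eq_abs]
  apply Real.sqrt_le_sqrt
  have h1 : ((k.1 i : ℝ)) ^ 2 ≤ ∑ j, ((k.1 j : ℝ)) ^ 2 :=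
    Finset.single_le_sum (f := fun j => ((k.1 j : ℝ)) ^ 2) (fun j _ => sq_nonneg _) (Finset.mem_univ i)
  have h2 : (0:ℝ) ≤ ∑ j, ((k.2 j : ℝ)) ^ 2 := Finset.sum_nonneg fun j _ => sq_nonneg _
  linarith

lemma my_coord_le_jap2 (k : Idx ν d) (i : Fin d) : max 1 |((k.2 i : ℝ))| ≤ japIdx k := by
  refine max_le (my_one_le_jap k) (le_max_of_le_right ?_)
  rw [← Real.sqrt_sq_eq_abs]
  apply Real.sqrt_le_sqrt
  have h1 : ((k.2 i : ℝ)) ^ 2 ≤ ∑ j, ((k.2 j : ℝ)) ^ 2 :=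
    Finset.single_le_sum (f := fun j => ((k.2 j : ℝ)) ^ 2) (fun j _ => sq_nonneg _) (Finset.mem_univ i)
  have h2 : (0:ℝ) ≤ ∑ j, ((k.1 j : ℝ)) ^ 2 := Finset.sum_nonneg fun j _ => sq_nonneg _
  linarith

end JapLemmas



-- 1-d summability
lemma my_S1_lt_top {p : ℝ} (hp : 1 < p) :
    ∑' j : ℤ, ENNReal.ofReal ((max 1 |(j:ℝ)|) ^ (-p)) < ⊤ := by
  have hnonneg : ∀ j : ℤ, 0 ≤ (max 1 |(j:ℝ)|) ^ (-p) := fun j =>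
    Real.rpow_nonneg (le_trans zero_le_one (le_max_left _ _)) _
  have hsummN : Summable (fun n : ℕ => (max 1 |((n:ℤ):ℝ)|) ^ (-p)) := by
    rw [← summable_nat_add_iff 1]
    have : (fun n : ℕ => (max 1 |(((n+1:ℕ):ℤ):ℝ)|) ^ (-p)) = fun n : ℕ => ((n+1:ℕ):ℝ) ^ (-p) := by
      funext n
      congr 1
      rw [abs_of_nonneg (by positivity)]
      exact max_eq_right (by exact_mod_cast Nat.one_le_iff_ne_zero.mpr (Nat.succ_ne_zero n))
    rw [this]
    have h := Real.summable_nat_rpow_inv.mpr hp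
    have h2 : Summable (fun n : ℕ => ((n:ℝ) ^ p)⁻¹) := h
    rw [← summable_nat_add_iff 1] at h2
    refine h2.congr fun n => ?_
    rw [Real.rpow_neg (by positivity)]
  have hsumm : Summable (fun j : ℤ => (max 1 |(j:ℝ)|) ^ (-p)) := by
    refine Summable.of_nat_of_neg hsummN ?_
    refine hsummN.congr fun n => ?_
    push_cast
    rw [abs_neg]
  rw [← ENNReal.ofReal_tsum_of_nonneg hnonneg hsumm]
  exact ENNReal.ofReal_lt_top

-- factorization of tsum over a pi type
lemma my_tsum_pi {m : ℕ} (u : ℤ → ℝ≥0∞) :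
    ∑' g : Fin m → ℤ, (∏ i, u (g i)) = (∑' j : ℤ, u j) ^ m := by
  induction m with
  | zero =>
    rw [pow_zero]
    have : ∀ g : Fin 0 → ℤ, (∏ i, u (g i)) = 1 := fun g => by simp
    rw [tsum_congr this,
      tsum_eq_single (fun _ => (0:ℤ)) (fun b hb => absurd (Subsingleton.elim b _) hb)]
  | succ m ih =>
    rw [← (Fin.consEquiv (fun _ : Fin (m+1) => ℤ)).tsum_eq fun g => ∏ i, u (g i)]
    have : ∀ p : ℤ × (Fin m → ℤ),
        (∏ i, u (((Fin.consEquiv (fun _ : Fin (m+1) => ℤ)) p) i)) = u p.1 * ∏ i, u (p.2 i) := by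
      intro p
      rw [Fin.prod_univ_succ]
      congr 1 <;> simp [Fin.consEquiv]
    rw [tsum_congr this, ENNReal.tsum_prod']
    calc (∑' x : ℤ, ∑' y : Fin m → ℤ, u x * ∏ i, u (y i))
        = ∑' x : ℤ, u x * ∑' y : Fin m → ℤ, ∏ i, u (y i) := by
          exact tsum_congr fun x => ENNReal.tsum_mul_left
      _ = (∑' j : ℤ, u j) * (∑' j : ℤ, u j) ^ m := by rw [ih, ENNReal.tsum_mul_right]
      _ = (∑' j : ℤ, u j) ^ (m + 1) := by ring

lemma my_K_lt_top (ν d : ℕ) (hpos : 0 < ν + d) : ∑' k : Idx ν d,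
    ENNReal.ofReal (japIdx k ^ (-(2 * (s0 (ν + d) : ℝ)))) < ⊤ := by
  set n := ν + d with hn
  have hn0 : (0:ℝ) < (n:ℝ) := by exact_mod_cast hpos
  set p : ℝ := 2 * (s0 n : ℝ) / (n : ℝ) with hp_def
  have hs0n : (n:ℝ) < 2 * (s0 n : ℝ) := by
    have : n < 2 * s0 n := by simp only [s0]; omega
    exact_mod_cast this
  have hp1 : 1 < p := (lt_div_iff₀ hn0).mpr (by linarith)
  have hp0 : 0 ≤ p := le_of_lt (lt_trans one_pos hp1)
  have hnp : (n:ℝ) * p = 2 * (s0 n : ℝ) := by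
    rw [hp_def]; field_simp [hn0.ne']
  set u : ℤ → ℝ≥0∞ := fun j => ENNReal.ofReal ((max 1 |(j:ℝ)|) ^ (-p)) with hu
  -- pointwise bound
  have hpt : ∀ k : Idx ν d, ENNReal.ofReal (japIdx k ^ (-(2 * (s0 n : ℝ))))
      ≤ (∏ i, u (k.1 i)) * (∏ i, u (k.2 i)) := by
    intro k
    set X : ℝ := (∏ i, max 1 |((k.1 i : ℝ))|) * (∏ i, max 1 |((k.2 i : ℝ))|) with hX
    have hfac1 : ∀ i : Fin ν, (0:ℝ) ≤ max 1 |((k.1 i : ℝ))| :=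
      fun i => le_trans zero_le_one (le_max_left _ _)
    have hfac2 : ∀ i : Fin d, (0:ℝ) ≤ max 1 |((k.2 i : ℝ))| :=
      fun i => le_trans zero_le_one (le_max_left _ _)
    have hX0 : 0 < X := by
      apply mul_pos <;> apply Finset.prod_pos <;> intro i _ <;>
        exact lt_of_lt_of_le one_pos (le_max_left _ _)
    have hXle : X ≤ japIdx k ^ (n : ℕ) := by
      have h1 : (∏ i, max 1 |((k.1 i : ℝ))|) ≤ japIdx k ^ (ν : ℕ) := by
        calc (∏ i, max 1 |((k.1 i : ℝ))|) ≤ ∏ _i : Fin ν, japIdx k :=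
              Finset.prod_le_prod (fun i _ => hfac1 i) (fun i _ => my_coord_le_jap1 k i)
          _ = japIdx k ^ (ν : ℕ) := by rw [Finset.prod_const, Finset.card_univ, Fintype.card_fin]
      have h2 : (∏ i, max 1 |((k.2 i : ℝ))|) ≤ japIdx k ^ (d : ℕ) := by
        calc (∏ i, max 1 |((k.2 i : ℝ))|) ≤ ∏ _i : Fin d, japIdx k :=
              Finset.prod_le_prod (fun i _ => hfac2 i) (fun i _ => my_coord_le_jap2 k i)
          _ = japIdx k ^ (d : ℕ) := by rw [Finset.prod_const, Finset.card_univ, Fintype.card_fin]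
      calc X ≤ japIdx k ^ (ν:ℕ) * japIdx k ^ (d:ℕ) :=
            mul_le_mul h1 h2 (Finset.prod_nonneg fun i _ => hfac2 i)
              (pow_nonneg (le_of_lt (my_jap_pos k)) _)
        _ = japIdx k ^ (n:ℕ) := by rw [← pow_add]
    have hXp : X ^ p ≤ japIdx k ^ (2 * (s0 n : ℝ)) := by
      calc X ^ p ≤ (japIdx k ^ (n:ℕ)) ^ p :=
            Real.rpow_le_rpow (le_of_lt hX0) hXle hp0
        _ = (japIdx k ^ ((n:ℕ):ℝ)) ^ p := by rw [Real.rpow_natCast]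
        _ = japIdx k ^ ((n:ℝ) * p) := by
            rw [← Real.rpow_mul (le_of_lt (my_jap_pos k))]
        _ = japIdx k ^ (2 * (s0 n : ℝ)) := by rw [hnp]
    have hreal : japIdx k ^ (-(2 * (s0 n : ℝ))) ≤ X ^ (-p) := by
      rw [Real.rpow_neg (le_of_lt (my_jap_pos k)), Real.rpow_neg (le_of_lt hX0)]
      exact inv_anti₀ (Real.rpow_pos_of_pos hX0 p) hXp
    have hXsplit : X ^ (-p) = (∏ i, (max 1 |((k.1 i : ℝ))|) ^ (-p))
        * (∏ i, (max 1 |((k.2 i : ℝ))|) ^ (-p)) := by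
      rw [hX, Real.mul_rpow (Finset.prod_nonneg fun i _ => hfac1 i)
        (Finset.prod_nonneg fun i _ => hfac2 i),
        ← Real.finset_prod_rpow _ _ (fun i _ => hfac1 i),
        ← Real.finset_prod_rpow _ _ (fun i _ => hfac2 i)]
    calc ENNReal.ofReal (japIdx k ^ (-(2 * (s0 n : ℝ)))) ≤ ENNReal.ofReal (X ^ (-p)) :=
          ENNReal.ofReal_le_ofReal hreal
      _ = (∏ i, u (k.1 i)) * (∏ i, u (k.2 i)) := by
          rw [hXsplit, ENNReal.ofReal_mul (Finset.prod_nonneg fun i _ =>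
            Real.rpow_nonneg (hfac1 i) _),
            ENNReal.ofReal_prod_of_nonneg (fun i _ => Real.rpow_nonneg (hfac1 i) _),
            ENNReal.ofReal_prod_of_nonneg (fun i _ => Real.rpow_nonneg (hfac2 i) _)]
  calc (∑' k : Idx ν d, ENNReal.ofReal (japIdx k ^ (-(2 * (s0 n : ℝ)))))
      ≤ ∑' k : Idx ν d, (∏ i, u (k.1 i)) * (∏ i, u (k.2 i)) := ENNReal.tsum_le_tsum hpt
    _ = (∑' x : Fin ν → ℤ, ∏ i, u (x i)) * (∑' y : Fin d → ℤ, ∏ i, u (y i)) := by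
        rw [ENNReal.tsum_prod']
        calc (∑' x : Fin ν → ℤ, ∑' y : Fin d → ℤ, (∏ i, u (x i)) * (∏ i, u (y i)))
            = ∑' x : Fin ν → ℤ, (∏ i, u (x i)) * ∑' y : Fin d → ℤ, (∏ i, u (y i)) :=
              tsum_congr fun x => ENNReal.tsum_mul_left
          _ = _ := ENNReal.tsum_mul_right
    _ = (∑' j : ℤ, u j) ^ ν * (∑' j : ℤ, u j) ^ d := by rw [my_tsum_pi, my_tsum_pi]
    _ < ⊤ := by
        have hS := my_S1_lt_top hp1
        exact ENNReal.mul_lt_top (ENNReal.pow_lt_top hS) (ENNReal.pow_lt_top hS)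

section WeightLemmas
section JwLemmas
def Jw {ν d : ℕ} (t : ℝ) (k : Idx ν d) : ℝ≥0∞ := ENNReal.ofReal (japIdx k ^ t)

variable {ν d : ℕ}

lemma my_Jw_ne_top (t : ℝ) (k : Idx ν d) : Jw t k ≠ ⊤ := ENNReal.ofReal_ne_top

lemma my_Jw_ne_zero (t : ℝ) (k : Idx ν d) : Jw t k ≠ 0 := by
  simp only [Jw, ne_eq, ENNReal.ofReal_eq_zero, not_le]
  exact Real.rpow_pos_of_pos (my_jap_pos k) t

lemma my_one_le_Jw {t : ℝ} (ht : 0 ≤ t) (k : Idx ν d) : 1 ≤ Jw t k := by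
  rw [Jw, ← ENNReal.ofReal_one]
  exact ENNReal.ofReal_le_ofReal (Real.one_le_rpow (my_one_le_jap k) ht)

lemma my_Jw_mono {t₁ t₂ : ℝ} (h : t₁ ≤ t₂) (k : Idx ν d) : Jw t₁ k ≤ Jw t₂ k :=
  ENNReal.ofReal_le_ofReal (Real.rpow_le_rpow_of_exponent_le (my_one_le_jap k) h)

lemma my_Jw_sq (t : ℝ) (k : Idx ν d) :
    Jw t k ^ 2 = ENNReal.ofReal (japIdx k ^ (2 * t)) := by
  rw [Jw, ← ENNReal.ofReal_pow (Real.rpow_nonneg (le_of_lt (my_jap_pos k)) t)]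
  congr 1
  rw [mul_comm, Real.rpow_mul (le_of_lt (my_jap_pos k)), ← Real.rpow_natCast (japIdx k ^ t) 2]
  norm_num

lemma my_Jw_inv_sq (t : ℝ) (k : Idx ν d) :
    ((Jw t k)⁻¹) ^ 2 = ENNReal.ofReal (japIdx k ^ (-(2 * t))) := by
  rw [← ENNReal.inv_pow, my_Jw_sq, ← ENNReal.ofReal_inv_of_pos
    (Real.rpow_pos_of_pos (my_jap_pos k) _), ← Real.rpow_neg (le_of_lt (my_jap_pos k))]

lemma my_Jw_inv_mul (t : ℝ) (k : Idx ν d) : (Jw t k)⁻¹ * Jw t k = 1 :=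
  ENNReal.inv_mul_cancel (my_Jw_ne_zero t k) (my_Jw_ne_top t k)

lemma my_Jw_add_le {s : ℝ} (hs : 0 ≤ s) (x y : Idx ν d) :
    Jw s (x + y) ≤ ENNReal.ofReal (2 ^ s) * (Jw s x + Jw s y) := by
  have hx := my_jap_pos x
  have hy := my_jap_pos y
  have h1 : japIdx (x + y) ^ s ≤ (japIdx x + japIdx y) ^ s :=
    Real.rpow_le_rpow (le_of_lt (my_jap_pos _)) (my_jap_add x y) hs
  have h2 : (japIdx x + japIdx y) ^ s ≤ (2 * max (japIdx x) (japIdx y)) ^ s := by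
    apply Real.rpow_le_rpow (by linarith) _ hs
    rcases max_cases (japIdx x) (japIdx y) with ⟨hm, hle⟩ | ⟨hm, hle⟩ <;> rw [hm] <;> linarith
  have h3 : (2 * max (japIdx x) (japIdx y)) ^ s
      = 2 ^ s * (max (japIdx x) (japIdx y)) ^ s :=
    Real.mul_rpow (by norm_num) (by positivity)
  have h4 : (max (japIdx x) (japIdx y)) ^ s ≤ japIdx x ^ s + japIdx y ^ s := by
    rcases max_cases (japIdx x) (japIdx y) with ⟨hm, _⟩ | ⟨hm, _⟩ <;> rw [hm]
    · nlinarith [Real.rpow_pos_of_pos hy s, Real.rpow_pos_of_pos hx s]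
    · nlinarith [Real.rpow_pos_of_pos hy s, Real.rpow_pos_of_pos hx s]
  calc Jw s (x + y) ≤ ENNReal.ofReal (2 ^ s * (japIdx x ^ s + japIdx y ^ s)) := by
        apply ENNReal.ofReal_le_ofReal
        calc japIdx (x+y) ^ s ≤ (2 * max (japIdx x) (japIdx y)) ^ s := le_trans h1 h2
          _ = 2 ^ s * (max (japIdx x) (japIdx y)) ^ s := h3
          _ ≤ 2 ^ s * (japIdx x ^ s + japIdx y ^ s) := by
              apply mul_le_mul_of_nonneg_left h4 (by positivity)
    _ = ENNReal.ofReal (2 ^ s) * (Jw s x + Jw s y) := by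
        rw [ENNReal.ofReal_mul (by positivity), ENNReal.ofReal_add (by positivity) (by positivity)]
        rfl

end JwLemmas

end WeightLemmas
section Assembly
variable {ν d : ℕ}

lemma my_decay_eq (B C : Set (Idx ν d)) (t : ℝ) (M : Idx ν d → Idx ν d → ℂ) :
    decayNorm B C t M = (∑' k, (Jw t k * entrySup B C M k) ^ 2) ^ (1/2:ℝ) := by
  rw [decayNorm]
  congr 1
  exact tsum_congr fun k => by rw [mul_pow, my_Jw_sq]

lemma my_vec_eq (B : Set (Idx ν d)) (t : ℝ) (f : Idx ν d → ℂ) :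
    vecNorm B t f
      = (∑' k, (Jw t k * B.indicator (fun k' => ((‖f k'‖₊ : ℝ≥0∞))) k) ^ 2) ^ (1/2:ℝ) := by
  have hpt : ∀ k, (Jw t k * B.indicator (fun k' => ((‖f k'‖₊ : ℝ≥0∞))) k) ^ 2
      = B.indicator (fun k' => ENNReal.ofReal (japIdx k' ^ (2*t)) * (‖f k'‖₊ : ℝ≥0∞) ^ 2) k := by
    intro k
    by_cases hk : k ∈ B
    · rw [Set.indicator_of_mem hk, Set.indicator_of_mem hk, mul_pow, my_Jw_sq]
    · rw [Set.indicator_of_notMem hk, Set.indicator_of_notMem hk, mul_zero]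
      ring
  rw [vecNorm, tsum_congr hpt, ← tsum_subtype]

/-- Tame operator bound for matrices with finite `s`-decay norm acting on weighted `ℓ²`
spaces. -/
theorem decay_norm_operator_bound
    (ν d : ℕ) (hν : 1 ≤ ν) (hd : 1 ≤ d) (s : ℝ) (hs : (s0 (ν + d) : ℝ) ≤ s) :
    ∃ Cs : ℝ, 0 < Cs ∧
      ∀ B C : Set (Idx ν d), B ⊆ {k | k.2 ≠ 0} → C ⊆ {k | k.2 ≠ 0} →
      ∀ M : Idx ν d → Idx ν d → ℂ, decayNorm B C s M < ⊤ →
      ∀ h : Idx ν d → ℂ, vecNorm B s h < ⊤ →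
        (∀ k ∈ C, Summable fun k' : B => ‖M k (k' : Idx ν d) * h (k' : Idx ν d)‖) ∧
        vecNorm C s (fun k => ∑' k' : B, M k (k' : Idx ν d) * h (k' : Idx ν d))
          ≤ ENNReal.ofReal Cs * (decayNorm B C (s0 (ν + d)) M * vecNorm B s h
              + decayNorm B C s M * vecNorm B (s0 (ν + d)) h) := by
  set t0 : ℝ := ((s0 (ν + d) : ℕ) : ℝ) with ht0
  have ht0pos : 0 < t0 := by
    rw [ht0]
    exact_mod_cast Nat.succ_pos ((ν + d)/2)
  have ht0le : t0 ≤ s := hs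
  have hs0 : 0 ≤ s := le_trans (le_of_lt ht0pos) ht0le
  -- the constant
  set K : ℝ≥0∞ := (∑' k : Idx ν d, ((Jw t0 k)⁻¹) ^ 2) ^ (1/2:ℝ) with hK
  have hKlt : K < ⊤ := by
    rw [hK]
    refine ENNReal.rpow_lt_top_of_nonneg (by norm_num) ?_
    rw [tsum_congr fun k => my_Jw_inv_sq t0 k]
    exact (my_K_lt_top ν d (by omega)).ne
  set Ctot : ℝ≥0∞ := ENNReal.ofReal (2 ^ s) * K with hCtot
  have hCtot_ne : Ctot ≠ ⊤ := ENNReal.mul_ne_top ENNReal.ofReal_ne_top hKlt.ne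
  refine ⟨Ctot.toReal + 1, by positivity, ?_⟩
  intro B C hB hC M hM h hh
  set a : Idx ν d → ℝ≥0∞ := entrySup B C M with ha
  set hb : Idx ν d → ℝ≥0∞ := B.indicator (fun k' => ((‖h k'‖₊ : ℝ≥0∞))) with hhb
  -- norm identities
  have hDeq : ∀ t, decayNorm B C t M = (∑' k, (Jw t k * a k) ^ 2) ^ (1/2:ℝ) :=
    fun t => my_decay_eq B C t M
  have hVeq : vecNorm B s h = (∑' k, (Jw s k * hb k) ^ 2) ^ (1/2:ℝ) := my_vec_eq B s h
  have hVeq0 : vecNorm B t0 h = (∑' k, (Jw t0 k * hb k) ^ 2) ^ (1/2:ℝ) := my_vec_eq B t0 h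
  -- monotonicity
  have hDmono : decayNorm B C t0 M ≤ decayNorm B C s M := by
    rw [hDeq, hDeq]
    refine ENNReal.rpow_le_rpow (ENNReal.tsum_le_tsum fun k => ?_) (by norm_num)
    exact pow_le_pow_left' (mul_le_mul_left (my_Jw_mono ht0le k) _) 2
  have hVmono : vecNorm B t0 h ≤ vecNorm B s h := by
    rw [hVeq, hVeq0]
    refine ENNReal.rpow_le_rpow (ENNReal.tsum_le_tsum fun k => ?_) (by norm_num)
    exact pow_le_pow_left' (mul_le_mul_left (my_Jw_mono ht0le k) _) 2
  have hM0 : decayNorm B C t0 M < ⊤ := lt_of_le_of_lt hDmono hM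
  have hh0 : vecNorm B t0 h < ⊤ := lt_of_le_of_lt hVmono hh
  -- entry bound
  have hentry : ∀ k ∈ C, ∀ k' : Idx ν d, B.indicator (fun k' => ((‖M k k' * h k'‖₊ : ℝ≥0∞))) k'
      ≤ a (k - k') * hb k' := by
    intro k hk k'
    by_cases hk' : k' ∈ B
    · rw [Set.indicator_of_mem hk', hhb, Set.indicator_of_mem hk', nnnorm_mul,
        ENNReal.coe_mul]
      refine mul_le_mul_left ?_ _
      rw [ha, entrySup]
      exact le_iSup_of_le (k, k') (le_iSup_of_le ⟨hk, hk', rfl⟩ le_rfl)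
    · rw [Set.indicator_of_notMem hk', hhb, Set.indicator_of_notMem hk', mul_zero]
  -- ℓ¹ bounds via Cauchy–Schwarz
  have hL1a : (∑' j, a j) ≤ K * decayNorm B C t0 M := by
    have : ∀ j : Idx ν d, a j = (Jw t0 j)⁻¹ * (Jw t0 j * a j) := fun j => by
      rw [← mul_assoc, my_Jw_inv_mul, one_mul]
    calc (∑' j, a j) = ∑' j, (Jw t0 j)⁻¹ * (Jw t0 j * a j) := tsum_congr this
      _ ≤ (∑' j, ((Jw t0 j)⁻¹) ^ 2) ^ (1/2:ℝ) * (∑' j, (Jw t0 j * a j) ^ 2) ^ (1/2:ℝ) :=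
          my_tsum_CS _ _
      _ = K * decayNorm B C t0 M := by rw [hDeq]
  have hL1h : (∑' j, hb j) ≤ K * vecNorm B t0 h := by
    have : ∀ j : Idx ν d, hb j = (Jw t0 j)⁻¹ * (Jw t0 j * hb j) := fun j => by
      rw [← mul_assoc, my_Jw_inv_mul, one_mul]
    calc (∑' j, hb j) = ∑' j, (Jw t0 j)⁻¹ * (Jw t0 j * hb j) := tsum_congr this
      _ ≤ (∑' j, ((Jw t0 j)⁻¹) ^ 2) ^ (1/2:ℝ) * (∑' j, (Jw t0 j * hb j) ^ 2) ^ (1/2:ℝ) :=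
          my_tsum_CS _ _
      _ = K * vecNorm B t0 h := by rw [hVeq0]
  -- the convolution majorant
  set Pk : Idx ν d → ℝ≥0∞ := fun k => ∑' k', a (k - k') * hb k' with hPk
  have hPk_le : ∀ k : Idx ν d, Pk k ≤ decayNorm B C t0 M * vecNorm B t0 h := by
    intro k
    have htransA : (∑' j, (Jw t0 (k - j) * a (k - j)) ^ 2) = ∑' j, (Jw t0 j * a j) ^ 2 :=
      (Equiv.subLeft k).tsum_eq fun j => (Jw t0 j * a j) ^ 2
    calc Pk k ≤ ∑' k', (Jw t0 (k - k') * a (k - k')) * (Jw t0 k' * hb k') := by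
          refine ENNReal.tsum_le_tsum fun k' => ?_
          calc a (k - k') * hb k' = (1 * a (k-k')) * (1 * hb k') := by ring
            _ ≤ (Jw t0 (k-k') * a (k-k')) * (Jw t0 k' * hb k') := by
                have h1 := my_one_le_Jw (le_of_lt ht0pos) (ν := ν) (d := d) (k - k')
                have h2 := my_one_le_Jw (le_of_lt ht0pos) (ν := ν) (d := d) k'
                exact mul_le_mul (mul_le_mul_left h1 _) (mul_le_mul_left h2 _)
                  zero_le zero_le
      _ ≤ (∑' k', ((Jw t0 (k - k') * a (k - k'))) ^ 2) ^ (1/2:ℝ)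
            * (∑' k', (Jw t0 k' * hb k') ^ 2) ^ (1/2:ℝ) := my_tsum_CS _ _
      _ = decayNorm B C t0 M * vecNorm B t0 h := by rw [htransA, ← hDeq, ← hVeq0]
  have hPk_lt : ∀ k, Pk k < ⊤ := fun k =>
    lt_of_le_of_lt (hPk_le k) (ENNReal.mul_lt_top hM0 hh0)
  -- subtype sums are dominated by Pk
  have hsubB : ∀ k ∈ C, (∑' k' : B, ((‖M k (k' : Idx ν d) * h (k' : Idx ν d)‖₊ : ℝ≥0∞))) ≤ Pk k := by
    intro k hk
    rw [tsum_subtype B (fun k' => ((‖M k k' * h k'‖₊ : ℝ≥0∞)))]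
    exact ENNReal.tsum_le_tsum (hentry k hk)
  -- summability
  have hsummable : ∀ k ∈ C, Summable fun k' : B => ‖M k (k' : Idx ν d) * h (k' : Idx ν d)‖ := by
    intro k hk
    have hne : (∑' k' : B, ((‖M k (k' : Idx ν d) * h (k' : Idx ν d)‖₊ : ℝ≥0∞))) ≠ ⊤ :=
      ((hsubB k hk).trans_lt (hPk_lt k)).ne
    have hsum : Summable fun k' : B => ‖M k (k' : Idx ν d) * h (k' : Idx ν d)‖₊ :=
      ENNReal.tsum_coe_ne_top_iff_summable.mp hne
    have hsum2 := NNReal.summable_coe.mpr hsum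
    refine hsum2.congr fun k' => ?_
    rw [coe_nnnorm]
  refine ⟨hsummable, ?_⟩
  set Mh : Idx ν d → ℂ := fun k => ∑' k' : B, M k (k' : Idx ν d) * h (k' : Idx ν d) with hMh
  set hc : Idx ν d → ℝ≥0∞ := C.indicator (fun k => ((‖Mh k‖₊ : ℝ≥0∞))) with hhc
  have hMh_le : ∀ k, hc k ≤ Pk k := by
    intro k
    by_cases hk : k ∈ C
    · rw [hhc, Set.indicator_of_mem hk]
      have hsumn : Summable fun k' : B => ‖M k (k' : Idx ν d) * h (k' : Idx ν d)‖ := by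
        refine (hsummable k hk).congr fun k' => ?_
        rfl
      calc ((‖Mh k‖₊ : ℝ≥0∞)) = ENNReal.ofReal ‖Mh k‖ := (ofReal_norm _).symm
        _ ≤ ENNReal.ofReal (∑' k' : B, ‖M k (k' : Idx ν d) * h (k' : Idx ν d)‖) :=
            ENNReal.ofReal_le_ofReal (norm_tsum_le_tsum_norm hsumn)
        _ = ∑' k' : B, ENNReal.ofReal ‖M k (k' : Idx ν d) * h (k' : Idx ν d)‖ :=
            ENNReal.ofReal_tsum_of_nonneg (fun _ => norm_nonneg _) hsumn
        _ = ∑' k' : B, ((‖M k (k' : Idx ν d) * h (k' : Idx ν d)‖₊ : ℝ≥0∞)) :=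
            tsum_congr fun k' => ofReal_norm _
        _ ≤ Pk k := hsubB k hk
    · rw [hhc, Set.indicator_of_notMem hk]
      exact zero_le
  -- convolution pieces
  set A : Idx ν d → ℝ≥0∞ := fun j => Jw s j * a j with hA
  set cc : Idx ν d → ℝ≥0∞ := fun j => Jw s j * hb j with hcc
  set T1 : Idx ν d → ℝ≥0∞ := fun k => ∑' j, hb (k - j) * A j with hT1
  set T2 : Idx ν d → ℝ≥0∞ := fun k => ∑' j, a (k - j) * cc j with hT2
  have hptmain : ∀ k, Jw s k * hc k ≤ ENNReal.ofReal (2 ^ s) * (T1 k + T2 k) := by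
    intro k
    have hT1k : T1 k = ∑' j, (Jw s (k - j) * a (k - j)) * hb j := by
      calc T1 k = ∑' j, hb (k - j) * A j := rfl
        _ = ∑' j, hb (k - (k - j)) * A (k - j) :=
            ((Equiv.subLeft k).tsum_eq fun j => hb (k - j) * A j).symm
        _ = ∑' j, (Jw s (k - j) * a (k - j)) * hb j :=
            tsum_congr fun j => by rw [sub_sub_cancel, hA, mul_comm]
    calc Jw s k * hc k ≤ Jw s k * Pk k := mul_le_mul_right (hMh_le k) _
      _ = ∑' k', Jw s k * (a (k - k') * hb k') := ENNReal.tsum_mul_left.symm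
      _ ≤ ∑' k', ENNReal.ofReal (2^s) *
            ((Jw s (k-k') * a (k-k')) * hb k' + a (k-k') * (Jw s k' * hb k')) := by
          refine ENNReal.tsum_le_tsum fun k' => ?_
          have hJ : Jw s k ≤ ENNReal.ofReal (2^s) * (Jw s (k - k') + Jw s k') := by
            have hJ2 := my_Jw_add_le hs0 (k - k') k'
            rwa [sub_add_cancel] at hJ2
          calc Jw s k * (a (k-k') * hb k')
              ≤ (ENNReal.ofReal (2^s) * (Jw s (k-k') + Jw s k')) * (a (k-k') * hb k') :=
                mul_le_mul_left hJ _
            _ = ENNReal.ofReal (2^s) *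
                ((Jw s (k-k') * a (k-k')) * hb k' + a (k-k') * (Jw s k' * hb k')) := by ring
      _ = ENNReal.ofReal (2^s) * (T1 k + T2 k) := by
          rw [ENNReal.tsum_mul_left]
          congr 1
          rw [ENNReal.tsum_add, hT1k]
  -- main estimate
  have hmain : vecNorm C s Mh ≤ Ctot *
      (decayNorm B C t0 M * vecNorm B s h + decayNorm B C s M * vecNorm B t0 h) := by
    calc vecNorm C s Mh = (∑' k, (Jw s k * hc k) ^ 2) ^ (1/2:ℝ) := my_vec_eq C s Mh
      _ ≤ (∑' k, (ENNReal.ofReal (2^s) * (T1 k + T2 k)) ^ 2) ^ (1/2:ℝ) := by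
          refine ENNReal.rpow_le_rpow (ENNReal.tsum_le_tsum fun k => ?_) (by norm_num)
          exact pow_le_pow_left' (hptmain k) 2
      _ = ENNReal.ofReal (2^s) * (∑' k, (T1 k + T2 k) ^ 2) ^ (1/2:ℝ) := by
          rw [tsum_congr fun k =>
            (mul_pow (ENNReal.ofReal (2^s)) (T1 k + T2 k) 2 : _), ENNReal.tsum_mul_left,
            ENNReal.mul_rpow_of_nonneg _ _ (by norm_num : (0:ℝ) ≤ 1/2), my_pow_two_rpow_half]
      _ ≤ ENNReal.ofReal (2^s) *
            ((∑' k, T1 k ^ 2) ^ (1/2:ℝ) + (∑' k, T2 k ^ 2) ^ (1/2:ℝ)) :=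
          mul_le_mul_right (my_l2_add T1 T2) _
      _ ≤ ENNReal.ofReal (2^s) *
            ((∑' j, hb j) * (∑' j, A j ^ 2) ^ (1/2:ℝ)
              + (∑' j, a j) * (∑' j, cc j ^ 2) ^ (1/2:ℝ)) :=
          mul_le_mul_right (add_le_add (my_young hb A) (my_young a cc)) _
      _ = ENNReal.ofReal (2^s) *
            ((∑' j, hb j) * decayNorm B C s M + (∑' j, a j) * vecNorm B s h) := by
          rw [← hDeq s, ← hVeq]
      _ ≤ ENNReal.ofReal (2^s) *
            ((K * vecNorm B t0 h) * decayNorm B C s M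
              + (K * decayNorm B C t0 M) * vecNorm B s h) :=
          mul_le_mul_right (add_le_add (mul_le_mul_left hL1h _)
            (mul_le_mul_left hL1a _)) _
      _ = Ctot * (decayNorm B C t0 M * vecNorm B s h + decayNorm B C s M * vecNorm B t0 h) := by
          rw [hCtot]; ring
  refine le_trans hmain (mul_le_mul_left ?_ _)
  calc Ctot = ENNReal.ofReal Ctot.toReal := (ENNReal.ofReal_toReal hCtot_ne).symm
    _ ≤ ENNReal.ofReal (Ctot.toReal + 1) := ENNReal.ofReal_le_ofReal (by linarith)
end Assembly
end
end

section
/- Set s₀ := ⌊(ν+d)/2⌋ + 1 and let s ≥ s₀. There exist constants c(s) > 0 and K(s) > 0 such that: for every finite subset E ⊆ ℤ^ν × (ℤ^d \ {0}) and all matrices A, A' ∈ ℳ^E_E with A invertible, if P := A^{-1}(A' − A) satisfies |P|_{s₀} ≤ c(s), then A' is invertible and |A'^{-1}|_s ≤ K(s)( |A^{-1}|_s + |P|_s |A^{-1}|_{s₀} ). -/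
open scoped BigOperators ENNReal NNReal

noncomputable section

/-- The `s`-decay norm of a finite square matrix indexed by a finite set `E ⊆ ℤ^ν × ℤ^d`. -/
def decayNormFin {ν d : ℕ} (E : Finset (Idx ν d)) (s : ℝ) (M : Matrix ↥E ↥E ℂ) : ℝ≥0∞ :=
  (∑' k : Idx ν d, ENNReal.ofReal (japIdx k ^ (2 * s)) *
      (⨆ (p : ↥E × ↥E) (_ : (p.1 : Idx ν d) - (p.2 : Idx ν d) = k),
        (‖M p.1 p.2‖₊ : ℝ≥0∞)) ^ 2) ^ (1/2 : ℝ)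
set_option maxHeartbeats 1000000
namespace Aux

variable {ν d : ℕ}

/-- Embedding into Euclidean space. -/
def emb (k : Idx ν d) : EuclideanSpace ℝ (Fin ν ⊕ Fin d) :=
  (WithLp.equiv 2 _).symm (Sum.elim (fun i => (k.1 i : ℝ)) (fun i => (k.2 i : ℝ)))

lemma emb_add (a b : Idx ν d) : emb (a + b) = emb a + emb b := by
  ext j
  cases j with
  | inl i => show ((a.1 i + b.1 i : ℤ) : ℝ) = _; push_cast; rfl
  | inr i => show ((a.2 i + b.2 i : ℤ) : ℝ) = _; push_cast; rfl

lemma japIdx_eq (k : Idx ν d) : japIdx k = max 1 ‖emb k‖ := by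
  rw [japIdx, EuclideanSpace.norm_eq]
  congr 2
  rw [Fintype.sum_sum_type]
  congr 1
  · apply Finset.sum_congr rfl; intro i _
    rw [show emb k (Sum.inl i) = ((k.1 i : ℤ) : ℝ) from rfl, Real.norm_eq_abs, sq_abs]
  · apply Finset.sum_congr rfl; intro i _
    rw [show emb k (Sum.inr i) = ((k.2 i : ℤ) : ℝ) from rfl, Real.norm_eq_abs, sq_abs]

lemma one_le_japIdx (k : Idx ν d) : 1 ≤ japIdx k := le_max_left _ _

lemma japIdx_pos (k : Idx ν d) : 0 < japIdx k := lt_of_lt_of_le one_pos (one_le_japIdx k)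

lemma japIdx_add_le (a b : Idx ν d) : japIdx (a + b) ≤ japIdx a + japIdx b := by
  rw [japIdx_eq, japIdx_eq, japIdx_eq, emb_add]
  rcases le_total 1 ‖emb a + emb b‖ with h | h
  · rw [max_eq_right h]
    calc ‖emb a + emb b‖ ≤ ‖emb a‖ + ‖emb b‖ := norm_add_le _ _
    _ ≤ _ := add_le_add (le_max_right _ _) (le_max_right _ _)
  · rw [max_eq_left h]
    calc (1:ℝ) ≤ 1 + 1 := by norm_num
    _ ≤ _ := add_le_add (le_max_left _ _) (le_max_left _ _)

lemma coord_le_japIdx (k : Idx ν d) (j : Fin ν ⊕ Fin d) :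
    max 1 |emb k j| ≤ japIdx k := by
  rw [japIdx_eq]
  apply max_le_max le_rfl
  calc |emb k j| = ‖emb k j‖ := rfl
  _ ≤ ‖emb k‖ := by
      rw [EuclideanSpace.norm_eq]
      rw [show ‖emb k j‖ = Real.sqrt (‖emb k j‖^2) by
        rw [Real.sqrt_sq (norm_nonneg _)]]
      apply Real.sqrt_le_sqrt
      exact Finset.single_le_sum (f := fun i => ‖emb k i‖^2)
        (fun i _ => sq_nonneg _) (Finset.mem_univ j)


section Part2
variable {ν d : ℕ}

/-- weight -/
def w (s : ℝ) (k : Idx ν d) : ℝ≥0∞ := ENNReal.ofReal (japIdx k ^ s)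

lemma w_ne_zero {s : ℝ} (k : Idx ν d) : w s k ≠ 0 := by
  simp only [w, ne_eq, ENNReal.ofReal_eq_zero, not_le]
  exact Real.rpow_pos_of_pos (japIdx_pos k) s

lemma w_ne_top {s : ℝ} (k : Idx ν d) : w s k ≠ ⊤ := ENNReal.ofReal_ne_top

lemma w_mono {s' s : ℝ} (h : s' ≤ s) (k : Idx ν d) : w s' k ≤ w s k :=
  ENNReal.ofReal_le_ofReal (Real.rpow_le_rpow_of_exponent_le (one_le_japIdx k) h)

lemma one_le_w {s : ℝ} (hs : 0 ≤ s) (k : Idx ν d) : 1 ≤ w s k := by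
  have := w_mono (s' := 0) hs k
  simpa [w, Real.rpow_zero] using this

lemma w_sq {s : ℝ} (k : Idx ν d) : (w s k) ^ 2 = ENNReal.ofReal (japIdx k ^ (2 * s)) := by
  rw [w, ← ENNReal.ofReal_pow (Real.rpow_nonneg (le_of_lt (japIdx_pos k)) s)]
  congr 1
  rw [← Real.rpow_natCast (japIdx k ^ s) 2, ← Real.rpow_mul (le_of_lt (japIdx_pos k))]
  norm_num [mul_comm]

/-- subadditivity of the weight -/
lemma w_add_le {s : ℝ} (hs : 0 ≤ s) (x y : Idx ν d) :
    w s (x + y) ≤ ENNReal.ofReal (2 ^ s) * (w s x + w s y) := by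
  rw [w, w, w, ← ENNReal.ofReal_add (Real.rpow_nonneg (japIdx_pos x).le s)
    (Real.rpow_nonneg (japIdx_pos y).le s),
    ← ENNReal.ofReal_mul (Real.rpow_nonneg (by norm_num) s)]
  apply ENNReal.ofReal_le_ofReal
  calc japIdx (x + y) ^ s ≤ (japIdx x + japIdx y) ^ s :=
        Real.rpow_le_rpow (japIdx_pos _).le (japIdx_add_le x y) hs
  _ ≤ (2 * max (japIdx x) (japIdx y)) ^ s := by
        apply Real.rpow_le_rpow (by nlinarith [japIdx_pos x, japIdx_pos y]) _ hs
        rcases le_total (japIdx x) (japIdx y) with h | h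
        · rw [max_eq_right h]; linarith
        · rw [max_eq_left h]; linarith
  _ = 2 ^ s * max (japIdx x) (japIdx y) ^ s := by
        rw [Real.mul_rpow (by norm_num) (le_max_of_le_left (japIdx_pos x).le)]
  _ ≤ 2 ^ s * (japIdx x ^ s + japIdx y ^ s) := by
        apply mul_le_mul_of_nonneg_left _ (Real.rpow_nonneg (by norm_num) s)
        rcases le_total (japIdx x) (japIdx y) with h | h
        · rw [max_eq_right h]
          nlinarith [Real.rpow_nonneg (japIdx_pos x).le s, Real.rpow_nonneg (japIdx_pos y).le s]
        · rw [max_eq_left h]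
          nlinarith [Real.rpow_nonneg (japIdx_pos x).le s, Real.rpow_nonneg (japIdx_pos y).le s]

/-- ℓ² norm of an `ℝ≥0∞`-valued sequence. -/
def L2 (f : Idx ν d → ℝ≥0∞) : ℝ≥0∞ := (∑' k, f k ^ 2) ^ (1/2 : ℝ)

lemma L2_mono {f g : Idx ν d → ℝ≥0∞} (h : ∀ k, f k ≤ g k) : L2 f ≤ L2 g :=
  ENNReal.rpow_le_rpow (ENNReal.tsum_le_tsum fun k => pow_le_pow_left' (h k) 2) (by norm_num)

lemma pow_two_eq_rpow (x : ℝ≥0∞) : x ^ 2 = x ^ (2:ℝ) := by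
  rw [← ENNReal.rpow_natCast x 2]; norm_num

lemma L2_sq {f : Idx ν d → ℝ≥0∞} : (L2 f) ^ 2 = ∑' k, f k ^ 2 := by
  rw [pow_two_eq_rpow, L2, ← ENNReal.rpow_mul]
  norm_num

lemma L2_smul (c : ℝ≥0∞) (f : Idx ν d → ℝ≥0∞) : L2 (fun k => c * f k) = c * L2 f := by
  rw [L2, L2]
  simp only [mul_pow, ENNReal.tsum_mul_left]
  rw [ENNReal.mul_rpow_of_nonneg _ _ (by norm_num : (0:ℝ) ≤ 1/2)]
  congr 1
  rw [pow_two_eq_rpow, ← ENNReal.rpow_mul]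
  norm_num

/-- Cauchy-Schwarz for tsums in `ℝ≥0∞`. -/
lemma tsum_mul_le_L2 (f g : Idx ν d → ℝ≥0∞) : ∑' k, f k * g k ≤ L2 f * L2 g := by
  have hconj : Real.HolderConjugate 2 2 := Real.HolderConjugate.two_two
  have := ENNReal.lintegral_mul_le_Lp_mul_Lq (MeasureTheory.Measure.count (α := Idx ν d)) hconj
    (Measurable.of_discrete (f := f)).aemeasurable (Measurable.of_discrete (f := g)).aemeasurable
  simp only [Pi.mul_apply, MeasureTheory.lintegral_count] at this
  calc ∑' k, f k * g k ≤ (∑' k, f k ^ (2:ℝ)) ^ (1/2:ℝ) * (∑' k, g k ^ (2:ℝ)) ^ (1/2:ℝ) := this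
  _ = L2 f * L2 g := by
      rw [L2, L2]
      congr 2 <;> · apply tsum_congr; intro k; rw [pow_two_eq_rpow]

/-- Minkowski. -/
lemma L2_add_le (f g : Idx ν d → ℝ≥0∞) : L2 (fun k => f k + g k) ≤ L2 f + L2 g := by
  have := ENNReal.lintegral_Lp_add_le (μ := MeasureTheory.Measure.count (α := Idx ν d))
    (Measurable.of_discrete (f := f)).aemeasurable (Measurable.of_discrete (f := g)).aemeasurable
    (by norm_num : (1:ℝ) ≤ 2)
  simp only [Pi.add_apply, MeasureTheory.lintegral_count] at this
  calc L2 (fun k => f k + g k) = (∑' k, (f k + g k) ^ (2:ℝ)) ^ (1/2:ℝ) := by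
        rw [L2]; congr 1; apply tsum_congr; intro k; rw [pow_two_eq_rpow]
  _ ≤ (∑' k, f k ^ (2:ℝ)) ^ (1/2:ℝ) + (∑' k, g k ^ (2:ℝ)) ^ (1/2:ℝ) := this
  _ = L2 f + L2 g := by
      rw [L2, L2]
      congr 2 <;> · apply tsum_congr; intro k; rw [pow_two_eq_rpow]

/-- convolution -/
def conv (F G : Idx ν d → ℝ≥0∞) (k : Idx ν d) : ℝ≥0∞ := ∑' q, F (k - q) * G q

lemma tsum_translate (F : Idx ν d → ℝ≥0∞) (q : Idx ν d) : ∑' k, F (k - q) = ∑' k, F k :=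
  (Equiv.subRight q).tsum_eq F

/-- Young's inequality `ℓ² * ℓ¹ → ℓ²`. -/
lemma L2_conv_le (F G : Idx ν d → ℝ≥0∞) : L2 (conv F G) ≤ L2 F * ∑' q, G q := by
  have key : ∀ k, conv F G k ^ 2 ≤ (∑' q, G q) * ∑' q, F (k - q) ^ 2 * G q := by
    intro k
    have h1 : conv F G k ≤ L2 (fun q => G q ^ (1/2:ℝ)) *
        L2 (fun q => F (k - q) * G q ^ (1/2:ℝ)) := by
      rw [conv]
      refine le_trans (le_of_eq (tsum_congr fun q => ?_)) (tsum_mul_le_L2 _ _)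
      rw [show F (k-q) * G q = G q ^ (1/2:ℝ) * (F (k - q) * G q ^ (1/2:ℝ)) by
        rw [← mul_assoc, mul_comm (G q ^ (1/2:ℝ)), mul_assoc,
            ← ENNReal.rpow_add_of_nonneg _ _ (by norm_num) (by norm_num)]
        norm_num]
    have h2 : (L2 (fun q => G q ^ (1/2:ℝ))) ^ 2 = ∑' q, G q := by
      rw [L2_sq]
      apply tsum_congr; intro q
      rw [pow_two_eq_rpow, ← ENNReal.rpow_mul]; norm_num
    have h3 : (L2 (fun q => F (k - q) * G q ^ (1/2:ℝ))) ^ 2 = ∑' q, F (k - q) ^ 2 * G q := by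
      rw [L2_sq]
      apply tsum_congr; intro q
      rw [mul_pow]
      congr 1
      rw [pow_two_eq_rpow, ← ENNReal.rpow_mul]; norm_num
    calc conv F G k ^ 2 ≤ (L2 (fun q => G q ^ (1/2:ℝ)) *
          L2 (fun q => F (k - q) * G q ^ (1/2:ℝ))) ^ 2 := pow_le_pow_left' h1 2
    _ = (∑' q, G q) * ∑' q, F (k - q) ^ 2 * G q := by rw [mul_pow, h2, h3]
  calc L2 (conv F G) = (∑' k, conv F G k ^ 2) ^ (1/2:ℝ) := rfl
  _ ≤ ((∑' q, G q) * ∑' k, ∑' q, F (k - q) ^ 2 * G q) ^ (1/2:ℝ) := by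
      apply ENNReal.rpow_le_rpow _ (by norm_num)
      rw [← ENNReal.tsum_mul_left]
      exact ENNReal.tsum_le_tsum key
  _ = ((∑' q, G q) * ((∑' q, G q) * ∑' k, F k ^ 2)) ^ (1/2:ℝ) := by
      congr 2
      rw [ENNReal.tsum_comm]
      calc ∑' q, ∑' k, F (k - q) ^ 2 * G q = ∑' (q : Idx ν d), G q * ∑' k, F (k - q)^2 := by
            apply tsum_congr; intro q
            rw [← ENNReal.tsum_mul_left]
            apply tsum_congr; intro k; ring
      _ = ∑' (q : Idx ν d), G q * ∑' k, F k ^ 2 := by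
            apply tsum_congr; intro q
            rw [tsum_translate (fun k => F k ^ 2) q]
      _ = (∑' q, G q) * ∑' k, F k ^ 2 := by rw [ENNReal.tsum_mul_right]
  _ = L2 F * ∑' q, G q := by
      rw [← mul_assoc, ← sq, ENNReal.mul_rpow_of_nonneg _ _ (by norm_num : (0:ℝ) ≤ 1/2),
        L2, pow_two_eq_rpow, ← ENNReal.rpow_mul]
      norm_num [mul_comm]

end Part2
set_option maxHeartbeats 1000000

section Part3
variable {ν d : ℕ}

/-- one-dimensional summand -/
def oneD (q : ℝ) (m : ℤ) : ℝ≥0∞ := ENNReal.ofReal (((max 1 |(m:ℝ)|) ^ q)⁻¹)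

lemma tsum_oneD_lt_top {q : ℝ} (hq : 1 < q) : ∑' m : ℤ, oneD q m < ⊤ := by
  have hq0 : (0:ℝ) < q := lt_trans one_pos hq
  set g : ℕ → ℝ≥0∞ := fun n => ENNReal.ofReal (2^q * (1/((n:ℝ)+1) ^ q)) with hg
  have hsum : Summable (fun n : ℕ => 2^q * (1 / ((n:ℝ)+1) ^ q)) := by
    apply Summable.mul_left
    have h1 := Real.summable_one_div_nat_rpow.mpr hq
    have h2 := (_root_.summable_nat_add_iff 1).mpr h1
    simpa using h2
  have hgtop : ∑' n : ℕ, g n < ⊤ := by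
    rw [hg, ← ENNReal.ofReal_tsum_of_nonneg (fun n => by positivity) hsum]
    exact ENNReal.ofReal_lt_top
  have key : ∀ m : ℤ, ((m.natAbs : ℝ) + 1) ≤ 2 * max 1 |(m:ℝ)| := by
    intro m
    have h1 : (1:ℝ) ≤ max 1 |(m:ℝ)| := le_max_left _ _
    have h2 : |(m:ℝ)| ≤ max 1 |(m:ℝ)| := le_max_right _ _
    have h3 : (m.natAbs : ℝ) = |(m:ℝ)| := by
      rw [Nat.cast_natAbs, Int.cast_abs]
    linarith
  have bound : ∀ m : ℤ, oneD q m ≤ g m.natAbs := by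
    intro m
    rw [oneD, hg]
    apply ENNReal.ofReal_le_ofReal
    have hmax : (0:ℝ) < max 1 |(m:ℝ)| := lt_of_lt_of_le one_pos (le_max_left _ _)
    have h1 : ((m.natAbs:ℝ)+1) ^ q ≤ 2^q * (max 1 |(m:ℝ)|) ^ q := by
      rw [← Real.mul_rpow (by norm_num) hmax.le]
      exact Real.rpow_le_rpow (by positivity) (key m) hq0.le
    calc ((max 1 |(m:ℝ)|) ^ q)⁻¹ ≤ 2^q / ((m.natAbs:ℝ)+1) ^ q := by
          rw [inv_eq_one_div, div_le_div_iff₀ (by positivity) (by positivity), one_mul]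
          exact h1
    _ = 2^q * (1/((m.natAbs:ℝ)+1) ^ q) := by ring
  calc ∑' m : ℤ, oneD q m ≤ ∑' m : ℤ, g m.natAbs := ENNReal.tsum_le_tsum bound
  _ = (∑' n : ℕ, g ((n:ℤ)).natAbs) + ∑' n : ℕ, g ((-((n:ℤ)+1)).natAbs) :=
      tsum_of_nat_of_neg_add_one ENNReal.summable ENNReal.summable
  _ = (∑' n : ℕ, g n) + ∑' n : ℕ, g (n+1) := by
      congr 1 <;> · apply tsum_congr; intro n; congr 1; simp
  _ < ⊤ := by
      apply ENNReal.add_lt_top.mpr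
      refine ⟨hgtop, lt_of_le_of_lt ?_ hgtop⟩
      exact ENNReal.tsum_comp_le_tsum_of_injective (add_left_injective 1) g
  
lemma tsum_pi_prod (f : ℤ → ℝ≥0∞) (m : ℕ) :
    ∑' v : (Fin m → ℤ), ∏ i, f (v i) = (∑' x : ℤ, f x) ^ m := by
  induction m with
  | zero =>
      haveI : Unique (Fin 0 → ℤ) := ⟨⟨fun i => i.elim0⟩, fun v => funext fun i => i.elim0⟩
      rw [tsum_eq_single default (fun b' hb' => absurd (Subsingleton.elim b' default) hb')]
      simp
  | succ m ih =>
      rw [← (Fin.consEquiv (fun _ : Fin (m+1) => ℤ)).tsum_eq]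
      have : ∀ p : ℤ × (Fin m → ℤ),
          (∏ i, f (((Fin.consEquiv (fun _ : Fin (m+1) => ℤ)) p) i)) = f p.1 * ∏ i, f (p.2 i) := by
        intro p
        have h0 : ((Fin.consEquiv (fun _ : Fin (m+1) => ℤ)) p) = Fin.cons p.1 p.2 := rfl
        rw [h0, Fin.prod_univ_succ]
        simp
      rw [tsum_congr this, ENNReal.tsum_prod (f := fun (a : ℤ) (b : Fin m → ℤ) => f a * ∏ i, f (b i))]
      calc ∑' (a : ℤ) (b : Fin m → ℤ), f a * ∏ i, f (b i)
          = ∑' (a : ℤ), f a * ∑' b : Fin m → ℤ, ∏ i, f (b i) := by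
            apply tsum_congr; intro a; rw [ENNReal.tsum_mul_left]
      _ = (∑' x : ℤ, f x) ^ m * ∑' x : ℤ, f x := by
            rw [ih, ENNReal.tsum_mul_right]; ring
      _ = (∑' x : ℤ, f x) ^ (m+1) := by ring

/-- the constant `C₀ = ∑ ⟨k⟩^{-2 s₀}` -/
def C0c (ν d : ℕ) : ℝ≥0∞ := ∑' k : Idx ν d, (w ((s0 (ν+d) : ℕ) : ℝ) k)⁻¹ ^ 2

lemma C0c_lt_top (hn : 1 ≤ ν + d) : C0c ν d < ⊤ := by
  rw [C0c, show s0 (ν+d) = (ν+d)/2 + 1 from rfl]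
  set n := ν + d with hn'
  set S : ℝ := (((n/2 + 1 : ℕ)) : ℝ) with hS
  have hnpos : (0:ℝ) < n := by exact_mod_cast hn
  have h2S : (n:ℝ) + 1 ≤ 2 * S := by
    rw [hS]
    have h := (by omega : n ≤ 2*(n/2)+1)
    have h' : (n:ℝ) ≤ 2*((n/2 : ℕ):ℝ) + 1 := by exact_mod_cast h
    push_cast
    linarith
  set q : ℝ := 2 * S / n with hqdef
  have hq : 1 < q := by
    rw [hqdef, lt_div_iff₀ hnpos]
    linarith
  have hq0 : (0:ℝ) ≤ q := le_of_lt (lt_trans one_pos hq)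
  have hpt : ∀ k : Idx ν d, (w S k)⁻¹ ^ 2
      ≤ (∏ i : Fin ν, oneD q (k.1 i)) * ∏ i : Fin d, oneD q (k.2 i) := by
    intro k
    have hL : (w S k)⁻¹ ^ 2 = ENNReal.ofReal ((japIdx k ^ (2*S))⁻¹) := by
      rw [← ENNReal.inv_pow, w_sq,
        ENNReal.ofReal_inv_of_pos (Real.rpow_pos_of_pos (japIdx_pos k) _)]
    have hprod : (∏ i : Fin ν, oneD q (k.1 i)) * ∏ i : Fin d, oneD q (k.2 i)
        = ENNReal.ofReal (∏ j : Fin ν ⊕ Fin d, ((max 1 |emb k j|) ^ q)⁻¹) := by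
      rw [ENNReal.ofReal_prod_of_nonneg (fun j _ => by positivity), Fintype.prod_sum_type]
      congr 1 <;> · apply Finset.prod_congr rfl; intro i _; rfl
    rw [hL, hprod]
    apply ENNReal.ofReal_le_ofReal
    have hprodpos : (0:ℝ) < ∏ j : Fin ν ⊕ Fin d, (max 1 |emb k j|) ^ q := by
      apply Finset.prod_pos; intro j _; positivity
    have hkey : ∏ j : Fin ν ⊕ Fin d, (max 1 |emb k j|) ^ q ≤ japIdx k ^ (2*S) := by
      calc ∏ j : Fin ν ⊕ Fin d, (max 1 |emb k j|) ^ q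
          ≤ ∏ _j : Fin ν ⊕ Fin d, japIdx k ^ q :=
            Finset.prod_le_prod (fun j _ => by positivity)
              (fun j _ => Real.rpow_le_rpow (by positivity) (coord_le_japIdx k j) hq0)
      _ = (japIdx k ^ q) ^ (Fintype.card (Fin ν ⊕ Fin d)) := by
            rw [Finset.prod_const, Finset.card_univ]
      _ = japIdx k ^ (2*S) := by
            rw [← Real.rpow_natCast (japIdx k ^ q), ← Real.rpow_mul (japIdx_pos k).le]
            congr 1
            have hcard : (Fintype.card (Fin ν ⊕ Fin d) : ℝ) = (n:ℝ) := by
              simp [Fintype.card_sum, hn']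
            rw [hcard, hqdef]
            field_simp
    rw [Finset.prod_inv_distrib]
    exact inv_anti₀ hprodpos hkey
  have hsplit : C0c ν d ≤ (∑' x : ℤ, oneD q x) ^ ν * (∑' x : ℤ, oneD q x) ^ d := by
    calc C0c ν d ≤ ∑' k : Idx ν d, (∏ i : Fin ν, oneD q (k.1 i)) * ∏ i : Fin d, oneD q (k.2 i) :=
          ENNReal.tsum_le_tsum hpt
    _ = ∑' (a : Fin ν → ℤ) (b : Fin d → ℤ),
          (∏ i : Fin ν, oneD q (a i)) * ∏ i : Fin d, oneD q (b i) := ENNReal.tsum_prod (f := fun (a : Fin ν → ℤ) (b : Fin d → ℤ) => (∏ i : Fin ν, oneD q (a i)) * ∏ i : Fin d, oneD q (b i))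
    _ = (∑' a : Fin ν → ℤ, ∏ i, oneD q (a i)) * (∑' b : Fin d → ℤ, ∏ i, oneD q (b i)) := by
          rw [← ENNReal.tsum_mul_right]
          apply tsum_congr; intro a
          rw [ENNReal.tsum_mul_left]
    _ = (∑' x : ℤ, oneD q x) ^ ν * (∑' x : ℤ, oneD q x) ^ d := by
          rw [tsum_pi_prod, tsum_pi_prod]
  have hT := tsum_oneD_lt_top hq
  exact lt_of_le_of_lt hsplit
    (ENNReal.mul_lt_top (ENNReal.pow_lt_top hT) (ENNReal.pow_lt_top hT))

end Part3
section Part4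
variable {ν d : ℕ}

/-- weighted ℓ² norm -/
def Nn (s : ℝ) (f : Idx ν d → ℝ≥0∞) : ℝ≥0∞ := L2 (fun k => w s k * f k)

/-- diagonal sups of a finite matrix -/
def esup (E : Finset (Idx ν d)) (M : Matrix ↥E ↥E ℂ) (k : Idx ν d) : ℝ≥0∞ :=
  ⨆ (p : ↥E × ↥E) (_ : (p.1 : Idx ν d) - (p.2 : Idx ν d) = k), (‖M p.1 p.2‖₊ : ℝ≥0∞)

lemma decayNormFin_eq_Nn (E : Finset (Idx ν d)) (s : ℝ) (M : Matrix ↥E ↥E ℂ) :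
    decayNormFin E s M = Nn s (esup E M) := by
  rw [decayNormFin, Nn, L2]
  congr 1
  apply tsum_congr; intro k
  rw [mul_pow, w_sq]
  rfl

variable {E : Finset (Idx ν d)}

lemma Nn_mono_f {s : ℝ} {f g : Idx ν d → ℝ≥0∞} (h : ∀ k, f k ≤ g k) : Nn s f ≤ Nn s g :=
  L2_mono fun k => mul_le_mul_right (h k) _

lemma Nn_mono_s {s' s : ℝ} (h : s' ≤ s) (f : Idx ν d → ℝ≥0∞) : Nn s' f ≤ Nn s f :=
  L2_mono fun k => mul_le_mul_left (w_mono h k) _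

lemma Nn_add_le (s : ℝ) (f g : Idx ν d → ℝ≥0∞) :
    Nn s (fun k => f k + g k) ≤ Nn s f + Nn s g := by
  calc Nn s (fun k => f k + g k)
      = L2 (fun k => w s k * f k + w s k * g k) := by
        rw [Nn]; congr 1; funext k; rw [mul_add]
  _ ≤ _ := L2_add_le _ _

lemma le_esup {M : Matrix ↥E ↥E ℂ} {k : Idx ν d} (p : ↥E × ↥E)
    (hp : (p.1 : Idx ν d) - (p.2 : Idx ν d) = k) :
    (‖M p.1 p.2‖₊ : ℝ≥0∞) ≤ esup E M k :=
  le_iSup₂ (f := fun (p : ↥E × ↥E) (_ : (p.1 : Idx ν d) - (p.2 : Idx ν d) = k) =>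
    (‖M p.1 p.2‖₊ : ℝ≥0∞)) p hp

lemma esup_le {M : Matrix ↥E ↥E ℂ} {k : Idx ν d} {B : ℝ≥0∞}
    (h : ∀ p : ↥E × ↥E, (p.1 : Idx ν d) - (p.2 : Idx ν d) = k → (‖M p.1 p.2‖₊ : ℝ≥0∞) ≤ B) :
    esup E M k ≤ B := iSup₂_le h

lemma esup_sub_le (M N : Matrix ↥E ↥E ℂ) (k : Idx ν d) :
    esup E (M - N) k ≤ esup E M k + esup E N k := by
  apply esup_le; intro p hp
  calc (‖(M - N) p.1 p.2‖₊ : ℝ≥0∞) = (‖M p.1 p.2 - N p.1 p.2‖₊ : ℝ≥0∞) := by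
        rw [Matrix.sub_apply]
  _ ≤ (‖M p.1 p.2‖₊ : ℝ≥0∞) + (‖N p.1 p.2‖₊ : ℝ≥0∞) := by
        rw [← ENNReal.coe_add]
        exact ENNReal.coe_le_coe.mpr (nnnorm_sub_le _ _)
  _ ≤ _ := add_le_add (le_esup p hp) (le_esup p hp)

lemma esup_mul_le (M N : Matrix ↥E ↥E ℂ) (k : Idx ν d) :
    esup E (M * N) k ≤ conv (esup E M) (esup E N) k := by
  classical
  apply esup_le; intro p hp
  rw [Matrix.mul_apply]
  calc (‖∑ c : ↥E, M p.1 c * N c p.2‖₊ : ℝ≥0∞)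
      ≤ ∑ c : ↥E, (‖M p.1 c * N c p.2‖₊ : ℝ≥0∞) := by
        rw [← ENNReal.coe_finset_sum]
        exact ENNReal.coe_le_coe.mpr (nnnorm_sum_le _ _)
  _ ≤ ∑ c : ↥E, esup E M ((p.1 : Idx ν d) - c) * esup E N ((c : Idx ν d) - p.2) := by
        apply Finset.sum_le_sum; intro c _
        rw [nnnorm_mul, ENNReal.coe_mul]
        exact mul_le_mul' (le_esup (p.1, c) rfl) (le_esup (c, p.2) rfl)
  _ = ∑ c : ↥E, (fun q => esup E M (k - q) * esup E N q) ((c : Idx ν d) - (p.2 : Idx ν d)) := by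
        apply Finset.sum_congr rfl; intro c _
        have hre : (p.1 : Idx ν d) - c = k - ((c : Idx ν d) - p.2) := by
          rw [← hp]; abel
        rw [hre]
  _ = ∑ q ∈ Finset.univ.image (fun c : ↥E => (c : Idx ν d) - (p.2 : Idx ν d)),
        esup E M (k - q) * esup E N q := by
        rw [Finset.sum_image]
        intro a _ b _ hab
        exact Subtype.coe_injective (sub_left_injective hab)
  _ ≤ ∑' q, esup E M (k - q) * esup E N q := ENNReal.sum_le_tsum _

lemma conv_comm (F G : Idx ν d → ℝ≥0∞) (k : Idx ν d) : conv F G k = conv G F k := by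
  rw [conv, conv, ← (Equiv.subLeft k).tsum_eq (fun q => G (k - q) * F q)]
  apply tsum_congr; intro q
  simp only [Equiv.subLeft_apply]
  rw [show k - (k - q) = q by abel, mul_comm]

/-- ℓ¹ bound by the s₀ norm -/
lemma tsum_le_C0_Nn (f : Idx ν d → ℝ≥0∞) :
    ∑' k, f k ≤ (C0c ν d) ^ (1/2:ℝ) * Nn ((s0 (ν+d) : ℕ) : ℝ) f := by
  set t : ℝ := ((s0 (ν+d) : ℕ) : ℝ)
  calc ∑' k, f k = ∑' k, (w t k)⁻¹ * (w t k * f k) := by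
        apply tsum_congr; intro k
        rw [← mul_assoc, ENNReal.inv_mul_cancel (w_ne_zero k) (w_ne_top k), one_mul]
  _ ≤ L2 (fun k => (w t k)⁻¹) * L2 (fun k => w t k * f k) := tsum_mul_le_L2 _ _
  _ = (C0c ν d) ^ (1/2:ℝ) * Nn t f := rfl

/-- the tame convolution estimate -/
lemma Nn_conv_le {s : ℝ} (hs : 0 ≤ s) (F G : Idx ν d → ℝ≥0∞) :
    Nn s (conv F G) ≤ ENNReal.ofReal (2^s) *
      (Nn s F * ∑' q, G q + (∑' q, F q) * Nn s G) := by
  have hpt : ∀ k, w s k * conv F G k ≤ ENNReal.ofReal (2^s) *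
      (conv (fun x => w s x * F x) G k + conv F (fun x => w s x * G x) k) := by
    intro k
    rw [conv, ← ENNReal.tsum_mul_left]
    calc ∑' q, w s k * (F (k - q) * G q)
        ≤ ∑' q, ENNReal.ofReal (2^s) *
            ((w s (k-q) * F (k-q)) * G q + F (k-q) * (w s q * G q)) := by
          apply ENNReal.tsum_le_tsum; intro q
          have hw : w s k ≤ ENNReal.ofReal (2^s) * (w s (k-q) + w s q) := by
            have := w_add_le hs (k - q) q
            rwa [sub_add_cancel] at this
          calc w s k * (F (k - q) * G q)
              ≤ (ENNReal.ofReal (2^s) * (w s (k-q) + w s q)) * (F (k - q) * G q) :=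
                mul_le_mul_left hw _
          _ = ENNReal.ofReal (2^s) *
              ((w s (k-q) * F (k-q)) * G q + F (k-q) * (w s q * G q)) := by ring
    _ = ENNReal.ofReal (2^s) *
          (conv (fun x => w s x * F x) G k + conv F (fun x => w s x * G x) k) := by
        rw [ENNReal.tsum_mul_left, conv, conv, ENNReal.tsum_add]
  calc Nn s (conv F G) ≤ L2 (fun k => ENNReal.ofReal (2^s) *
      (conv (fun x => w s x * F x) G k + conv F (fun x => w s x * G x) k)) := L2_mono hpt
  _ = ENNReal.ofReal (2^s) * L2 (fun k =>
      conv (fun x => w s x * F x) G k + conv F (fun x => w s x * G x) k) := L2_smul _ _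
  _ ≤ ENNReal.ofReal (2^s) *
      (L2 (conv (fun x => w s x * F x) G) + L2 (conv F (fun x => w s x * G x))) :=
        mul_le_mul_right (L2_add_le _ _) _
  _ ≤ ENNReal.ofReal (2^s) * (Nn s F * ∑' q, G q + (∑' q, F q) * Nn s G) := by
      apply mul_le_mul_right
      apply add_le_add
      · exact L2_conv_le _ _
      · calc L2 (conv F (fun x => w s x * G x))
            = L2 (conv (fun x => w s x * G x) F) := by
              congr 1; funext k; exact conv_comm _ _ k
        _ ≤ Nn s G * ∑' q, F q := L2_conv_le _ _
        _ = (∑' q, F q) * Nn s G := mul_comm _ _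

/-- finiteness of the decay norm of a finite matrix -/
lemma Nn_esup_lt_top (s : ℝ) (M : Matrix ↥E ↥E ℂ) : Nn s (esup E M) < ⊤ := by
  classical
  set D := (E ×ˢ E).image (fun p : Idx ν d × Idx ν d => p.1 - p.2) with hD
  have hzero : ∀ k ∉ D, (w s k * esup E M k) ^ 2 = 0 := by
    intro k hk
    have h0 : esup E M k = 0 := by
      apply le_antisymm _ zero_le
      apply esup_le; intro p hp
      exact absurd (Finset.mem_image.mpr ⟨((p.1 : Idx ν d), (p.2 : Idx ν d)),
        Finset.mem_product.mpr ⟨p.1.2, p.2.2⟩, hp⟩) hk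
    rw [h0, mul_zero]
    norm_num
  have heq : Nn s (esup E M) = (∑ k ∈ D, (w s k * esup E M k) ^ 2) ^ (1/2:ℝ) := by
    rw [Nn, L2, tsum_eq_sum hzero]
  rw [heq]
  apply ENNReal.rpow_lt_top_of_nonneg (by norm_num)
  apply ne_of_lt
  rw [ENNReal.sum_lt_top]
  intro k _
  have hfin : esup E M k < ⊤ := by
    apply lt_of_le_of_lt (esup_le fun p _ =>
      Finset.single_le_sum (f := fun p : ↥E × ↥E => (‖M p.1 p.2‖₊ : ℝ≥0∞))
        (fun _ _ => zero_le) (Finset.mem_univ p))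
    rw [ENNReal.sum_lt_top]
    intro p _
    exact ENNReal.coe_lt_top
  have : w s k * esup E M k < ⊤ := ENNReal.mul_lt_top (w_ne_top k).lt_top hfin
  exact ENNReal.pow_lt_top this

/-- row sums are controlled by the ℓ¹ norm of the diagonal sups -/
lemma rowsum_le_tsum_esup (M : Matrix ↥E ↥E ℂ) (i : ↥E) :
    ∑ j : ↥E, (‖M i j‖₊ : ℝ≥0∞) ≤ ∑' k, esup E M k := by
  classical
  calc ∑ j : ↥E, (‖M i j‖₊ : ℝ≥0∞)
      ≤ ∑ j : ↥E, (fun k => esup E M k) ((i : Idx ν d) - (j : Idx ν d)) :=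
        Finset.sum_le_sum fun j _ => le_esup (i, j) rfl
  _ = ∑ k ∈ Finset.univ.image (fun j : ↥E => (i : Idx ν d) - (j : Idx ν d)), esup E M k := by
        rw [Finset.sum_image]
        intro a _ b _ hab
        exact Subtype.coe_injective (sub_right_injective hab)
  _ ≤ ∑' k, esup E M k := ENNReal.sum_le_tsum _

/-- invertibility of `1 + P` when row sums are at most `1/2` -/
lemma isUnit_one_add {P : Matrix ↥E ↥E ℂ}
    (hP : ∀ i : ↥E, ∑ j : ↥E, (‖P i j‖₊ : ℝ≥0∞) ≤ 1/2) : IsUnit (1 + P) := by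
  classical
  rw [Matrix.isUnit_iff_isUnit_det, isUnit_iff_ne_zero]
  intro hdet
  obtain ⟨v, hv0, hv⟩ := Matrix.exists_mulVec_eq_zero_iff.mpr hdet
  obtain ⟨i0, hi0⟩ := Function.ne_iff.mp hv0
  obtain ⟨i1, _, hi1⟩ := Finset.exists_max_image Finset.univ (fun i => ‖v i‖₊)
    ⟨i0, Finset.mem_univ i0⟩
  have hvi1 : v i1 ≠ 0 := by
    intro h
    apply hi0
    have := hi1 i0 (Finset.mem_univ i0)
    rw [h] at this
    simpa using this
  have hvid : v i1 = -∑ j : ↥E, P i1 j * v j := by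
    have h := congrFun hv i1
    rw [Matrix.add_mulVec, Matrix.one_mulVec] at h
    have h2 : v i1 + (P.mulVec v) i1 = 0 := h
    rw [Matrix.mulVec, dotProduct] at h2
    linear_combination h2
  have hle : (‖v i1‖₊ : ℝ≥0∞) ≤ (1/2 : ℝ≥0∞) * (‖v i1‖₊ : ℝ≥0∞) := by
    calc (‖v i1‖₊ : ℝ≥0∞) = (‖∑ j : ↥E, P i1 j * v j‖₊ : ℝ≥0∞) := by rw [hvid, nnnorm_neg]
    _ ≤ ∑ j : ↥E, (‖P i1 j‖₊ : ℝ≥0∞) * (‖v j‖₊ : ℝ≥0∞) := by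
        calc ((‖∑ j : ↥E, P i1 j * v j‖₊ : ℝ≥0) : ℝ≥0∞)
            ≤ ((∑ j : ↥E, ‖P i1 j * v j‖₊ : ℝ≥0) : ℝ≥0∞) :=
              ENNReal.coe_le_coe.mpr (nnnorm_sum_le _ _)
        _ = ∑ j : ↥E, (‖P i1 j‖₊ : ℝ≥0∞) * (‖v j‖₊ : ℝ≥0∞) := by
              rw [ENNReal.coe_finset_sum]
              apply Finset.sum_congr rfl; intro j _
              rw [nnnorm_mul, ENNReal.coe_mul]
    _ ≤ ∑ j : ↥E, (‖P i1 j‖₊ : ℝ≥0∞) * (‖v i1‖₊ : ℝ≥0∞) := by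
        apply Finset.sum_le_sum; intro j _
        exact mul_le_mul_right (ENNReal.coe_le_coe.mpr (hi1 j (Finset.mem_univ j))) _
    _ = (∑ j : ↥E, (‖P i1 j‖₊ : ℝ≥0∞)) * (‖v i1‖₊ : ℝ≥0∞) := by rw [Finset.sum_mul]
    _ ≤ (1/2 : ℝ≥0∞) * (‖v i1‖₊ : ℝ≥0∞) := mul_le_mul_left (hP i1) _
  have hpos : (0:ℝ≥0∞) < (‖v i1‖₊ : ℝ≥0∞) := by
    simpa using hvi1
  have hhalf : (1/2 : ℝ≥0∞) * (‖v i1‖₊ : ℝ≥0∞) < (‖v i1‖₊ : ℝ≥0∞) := by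
    rw [show (1/2 : ℝ≥0∞) * (‖v i1‖₊ : ℝ≥0∞) = (‖v i1‖₊ : ℝ≥0∞)/2 by
      rw [one_div, ENNReal.div_eq_inv_mul]]
    exact ENNReal.half_lt_self hpos.ne' ENNReal.coe_ne_top
  exact absurd hle (not_le.mpr hhalf)

lemma cancel_half {x b : ℝ≥0∞} (hx : x ≠ ⊤) (h : x ≤ b + 2⁻¹ * x) : x ≤ 2 * b := by
  have hhalf : (2⁻¹ : ℝ≥0∞) * x = x / 2 := by rw [ENNReal.div_eq_inv_mul]
  rw [hhalf] at h
  have hx2 : x / 2 ≠ ⊤ := (ENNReal.div_lt_top hx (by norm_num)).ne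
  have h2 : x/2 + x/2 ≤ b + x/2 := by rw [ENNReal.add_halves]; exact h
  have h3 : x/2 ≤ b := by rwa [ENNReal.add_le_add_iff_right hx2] at h2
  calc x = 2 * (x/2) := (ENNReal.mul_div_cancel (by norm_num) (by norm_num)).symm
  _ ≤ 2 * b := mul_le_mul_right h3 _

end Part4
end Aux

/-- Perturbative (Neumann series) invertibility in the `s`-decay norm. -/
theorem neumann_series_decay
    (ν d : ℕ) (hν : 1 ≤ ν) (hd : 1 ≤ d) (s : ℝ) (hs : (s0 (ν + d) : ℝ) ≤ s) :
    ∃ c K : ℝ, 0 < c ∧ 0 < K ∧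
      ∀ E : Finset (Idx ν d), (∀ k ∈ E, k.2 ≠ 0) →
      ∀ A A' : Matrix ↥E ↥E ℂ, IsUnit A →
        decayNormFin E (s0 (ν + d)) (A⁻¹ * (A' - A)) ≤ ENNReal.ofReal c →
        IsUnit A' ∧
        decayNormFin E s A'⁻¹
          ≤ ENNReal.ofReal K * (decayNormFin E s A⁻¹
              + decayNormFin E s (A⁻¹ * (A' - A)) * decayNormFin E (s0 (ν + d)) A⁻¹) := by
  classical
  have hn1 : 1 ≤ ν + d := le_trans hν (Nat.le_add_right ν d)
  set t : ℝ := ((s0 (ν + d) : ℕ) : ℝ) with htdef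
  have ht0 : (0:ℝ) ≤ t := Nat.cast_nonneg _
  have hs0 : (0:ℝ) ≤ s := le_trans ht0 hs
  set Q := (Aux.C0c ν d) ^ (1/2:ℝ) with hQdef
  have hQtop : Q ≠ ⊤ := ENNReal.rpow_ne_top_of_nonneg (by norm_num) (Aux.C0c_lt_top hn1).ne
  have hQ0 : (0:ℝ) ≤ Q.toReal := ENNReal.toReal_nonneg
  have h2s : (0:ℝ) < 2^s := Real.rpow_pos_of_pos (by norm_num) s
  have h2t : (0:ℝ) < 2^t := Real.rpow_pos_of_pos (by norm_num) t
  have hsQ : 0 ≤ (2:ℝ)^s * Q.toReal := mul_nonneg h2s.le hQ0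
  have htQ : 0 ≤ (2:ℝ)^t * Q.toReal := mul_nonneg h2t.le hQ0
  set R : ℝ := (2:ℝ)^s * Q.toReal + (2:ℝ)^t * Q.toReal + Q.toReal + 1 with hRdef
  have hR0 : (0:ℝ) < R := by rw [hRdef]; linarith
  have hRR : R * (4*R)⁻¹ = 4⁻¹ := by
    rw [mul_inv, ← mul_assoc, mul_comm R, mul_assoc, mul_inv_cancel₀ hR0.ne', mul_one]
  refine ⟨(4*R)⁻¹, 4*R + 2, inv_pos.mpr (by linarith), by linarith, ?_⟩
  intro E _hE A A' hA hc
  have hdn : ∀ (u : ℝ) (M : Matrix ↥E ↥E ℂ), decayNormFin E u M = Aux.Nn u (Aux.esup E M) :=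
    fun u M => Aux.decayNormFin_eq_Nn E u M
  set P := A⁻¹ * (A' - A) with hPdef
  rw [hdn] at hc
  have hofQ : Q = ENNReal.ofReal Q.toReal := (ENNReal.ofReal_toReal hQtop).symm
  have hsmall : ∀ u : ℝ, (2:ℝ)^u * Q.toReal ≤ R →
      ENNReal.ofReal ((2:ℝ)^u) * Q * Aux.Nn t (Aux.esup E P) ≤ ENNReal.ofReal 4⁻¹ := by
    intro u hu
    calc ENNReal.ofReal ((2:ℝ)^u) * Q * Aux.Nn t (Aux.esup E P)
        ≤ ENNReal.ofReal ((2:ℝ)^u) * ENNReal.ofReal Q.toReal * ENNReal.ofReal ((4*R)⁻¹) := by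
          rw [← hofQ]; exact mul_le_mul_right hc _
    _ = ENNReal.ofReal ((2:ℝ)^u * Q.toReal * (4*R)⁻¹) := by
          rw [← ENNReal.ofReal_mul (Real.rpow_nonneg (by norm_num) u),
              ← ENNReal.ofReal_mul (mul_nonneg (Real.rpow_nonneg (by norm_num) u) hQ0)]
    _ ≤ ENNReal.ofReal 4⁻¹ := by
          apply ENNReal.ofReal_le_ofReal
          have h1 : (2:ℝ)^u * Q.toReal * (4*R)⁻¹ ≤ R * (4*R)⁻¹ :=
            mul_le_mul_of_nonneg_right hu (by positivity)
          linarith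
  have hl1 : ∑' k, Aux.esup E P k ≤ 1/2 := by
    calc ∑' k, Aux.esup E P k ≤ Q * Aux.Nn t (Aux.esup E P) := Aux.tsum_le_C0_Nn _
    _ ≤ ENNReal.ofReal Q.toReal * ENNReal.ofReal ((4*R)⁻¹) := by
        rw [← hofQ]; exact mul_le_mul_right hc _
    _ = ENNReal.ofReal (Q.toReal * (4*R)⁻¹) := (ENNReal.ofReal_mul hQ0).symm
    _ ≤ ENNReal.ofReal 2⁻¹ := by
        apply ENNReal.ofReal_le_ofReal
        have h1 : Q.toReal * (4*R)⁻¹ ≤ R * (4*R)⁻¹ :=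
          mul_le_mul_of_nonneg_right (by rw [hRdef]; linarith) (by positivity)
        have h2 : (4⁻¹ : ℝ) ≤ 2⁻¹ := by norm_num
        linarith
    _ = 1/2 := by
        rw [ENNReal.ofReal_inv_of_pos (by norm_num)]
        norm_num
  have hrow : ∀ i : ↥E, ∑ j : ↥E, ((‖P i j‖₊ : ℝ≥0) : ℝ≥0∞) ≤ 1/2 :=
    fun i => le_trans (Aux.rowsum_le_tsum_esup P i) hl1
  have hu1P : IsUnit (1 + P) := Aux.isUnit_one_add hrow
  have hdetA := (Matrix.isUnit_iff_isUnit_det A).mp hA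
  have hAP : A * P = A' - A := by
    rw [hPdef, ← Matrix.mul_assoc, Matrix.mul_nonsing_inv A hdetA, Matrix.one_mul]
  have hA'eq : A' = A * (1 + P) := by
    rw [Matrix.mul_add, Matrix.mul_one, hAP]; abel
  have hA' : IsUnit A' := by rw [hA'eq]; exact hA.mul hu1P
  refine ⟨hA', ?_⟩
  have hdet1P := (Matrix.isUnit_iff_isUnit_det _).mp hu1P
  have hinv : A'⁻¹ = (1 + P)⁻¹ * A⁻¹ := by rw [hA'eq, Matrix.mul_inv_rev]
  have hQid : (1 + P)⁻¹ = 1 - P * (1 + P)⁻¹ := by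
    have h := Matrix.mul_nonsing_inv (1 + P) hdet1P
    rw [Matrix.add_mul, Matrix.one_mul] at h
    exact eq_sub_of_add_eq h
  have hid : A'⁻¹ = A⁻¹ - P * A'⁻¹ := by
    calc A'⁻¹ = (1 - P * (1+P)⁻¹) * A⁻¹ := by rw [hinv, ← hQid]
    _ = A⁻¹ - P * ((1+P)⁻¹ * A⁻¹) := by rw [Matrix.sub_mul, Matrix.one_mul, Matrix.mul_assoc]
    _ = A⁻¹ - P * A'⁻¹ := by rw [← hinv]
  simp only [hdn]
  have hXfin : Aux.Nn s (Aux.esup E A'⁻¹) ≠ ⊤ := (Aux.Nn_esup_lt_top s _).ne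
  have hYfin : Aux.Nn t (Aux.esup E A'⁻¹) ≠ ⊤ := (Aux.Nn_esup_lt_top t _).ne
  have tame : ∀ u : ℝ, 0 ≤ u → ∀ (M N : Matrix ↥E ↥E ℂ),
      Aux.Nn u (Aux.esup E (M * N)) ≤ ENNReal.ofReal ((2:ℝ)^u) *
        (Aux.Nn u (Aux.esup E M) * (Q * Aux.Nn t (Aux.esup E N)) +
         (Q * Aux.Nn t (Aux.esup E M)) * Aux.Nn u (Aux.esup E N)) := by
    intro u hu M N
    calc Aux.Nn u (Aux.esup E (M*N))
        ≤ Aux.Nn u (Aux.conv (Aux.esup E M) (Aux.esup E N)) :=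
          Aux.Nn_mono_f (Aux.esup_mul_le M N)
    _ ≤ _ := le_trans (Aux.Nn_conv_le hu _ _) (by
          apply mul_le_mul_right
          exact add_le_add (mul_le_mul_right (Aux.tsum_le_C0_Nn _) _)
            (mul_le_mul_left (Aux.tsum_le_C0_Nn _) _))
  have hstep : ∀ u : ℝ, Aux.Nn u (Aux.esup E A'⁻¹) ≤
      Aux.Nn u (Aux.esup E A⁻¹) + Aux.Nn u (Aux.esup E (P * A'⁻¹)) := by
    intro u
    calc Aux.Nn u (Aux.esup E A'⁻¹) = Aux.Nn u (Aux.esup E (A⁻¹ - P * A'⁻¹)) := by rw [← hid]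
    _ ≤ Aux.Nn u (fun k => Aux.esup E A⁻¹ k + Aux.esup E (P * A'⁻¹) k) :=
        Aux.Nn_mono_f (Aux.esup_sub_le _ _)
    _ ≤ _ := Aux.Nn_add_le _ _ _
  have h14t : ENNReal.ofReal ((2:ℝ)^t) * Q * Aux.Nn t (Aux.esup E P) ≤ ENNReal.ofReal 4⁻¹ :=
    hsmall t (by rw [hRdef]; linarith)
  have h14s : ENNReal.ofReal ((2:ℝ)^s) * Q * Aux.Nn t (Aux.esup E P) ≤ ENNReal.ofReal 4⁻¹ :=
    hsmall s (by rw [hRdef]; linarith)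
  have hofReal4 : ENNReal.ofReal (4⁻¹:ℝ) ≤ 2⁻¹ := by
    calc ENNReal.ofReal (4⁻¹:ℝ) ≤ ENNReal.ofReal (2⁻¹:ℝ) :=
          ENNReal.ofReal_le_ofReal (by norm_num)
    _ = 2⁻¹ := by rw [ENNReal.ofReal_inv_of_pos (by norm_num)]; norm_num
  have hstep1 : Aux.Nn t (Aux.esup E A'⁻¹) ≤ Aux.Nn t (Aux.esup E A⁻¹)
      + 2⁻¹ * Aux.Nn t (Aux.esup E A'⁻¹) := by
    refine le_trans (hstep t) (add_le_add_right ?_ _)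
    calc Aux.Nn t (Aux.esup E (P * A'⁻¹))
        ≤ ENNReal.ofReal ((2:ℝ)^t) *
          (Aux.Nn t (Aux.esup E P) * (Q * Aux.Nn t (Aux.esup E A'⁻¹)) +
           (Q * Aux.Nn t (Aux.esup E P)) * Aux.Nn t (Aux.esup E A'⁻¹)) := tame t ht0 P A'⁻¹
    _ = 2 * (ENNReal.ofReal ((2:ℝ)^t) * Q * Aux.Nn t (Aux.esup E P)) *
          Aux.Nn t (Aux.esup E A'⁻¹) := by ring
    _ ≤ 2 * ENNReal.ofReal 4⁻¹ * Aux.Nn t (Aux.esup E A'⁻¹) :=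
        mul_le_mul_left (mul_le_mul_right h14t 2) _
    _ ≤ 2⁻¹ * Aux.Nn t (Aux.esup E A'⁻¹) := by
        apply mul_le_mul_left
        apply le_of_eq
        calc (2:ℝ≥0∞) * ENNReal.ofReal 4⁻¹ = ENNReal.ofReal 2 * ENNReal.ofReal 4⁻¹ := by
              norm_num
        _ = ENNReal.ofReal 2⁻¹ := by
              rw [← ENNReal.ofReal_mul (by norm_num : (0:ℝ) ≤ 2)]
              norm_num
        _ = 2⁻¹ := by rw [ENNReal.ofReal_inv_of_pos (by norm_num)]; norm_num
  have hY2 : Aux.Nn t (Aux.esup E A'⁻¹) ≤ 2 * Aux.Nn t (Aux.esup E A⁻¹) :=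
    Aux.cancel_half hYfin hstep1
  have hstep2 : Aux.Nn s (Aux.esup E A'⁻¹) ≤
      (Aux.Nn s (Aux.esup E A⁻¹) + 2 * (ENNReal.ofReal ((2:ℝ)^s) * Q) *
        Aux.Nn s (Aux.esup E P) * Aux.Nn t (Aux.esup E A⁻¹))
      + 2⁻¹ * Aux.Nn s (Aux.esup E A'⁻¹) := by
    refine le_trans (hstep s) ?_
    have hmid : Aux.Nn s (Aux.esup E (P * A'⁻¹)) ≤
        2 * (ENNReal.ofReal ((2:ℝ)^s) * Q) * Aux.Nn s (Aux.esup E P) * Aux.Nn t (Aux.esup E A⁻¹)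
        + 2⁻¹ * Aux.Nn s (Aux.esup E A'⁻¹) := by
      calc Aux.Nn s (Aux.esup E (P * A'⁻¹))
          ≤ ENNReal.ofReal ((2:ℝ)^s) *
            (Aux.Nn s (Aux.esup E P) * (Q * Aux.Nn t (Aux.esup E A'⁻¹)) +
             (Q * Aux.Nn t (Aux.esup E P)) * Aux.Nn s (Aux.esup E A'⁻¹)) := tame s hs0 P A'⁻¹
      _ = (ENNReal.ofReal ((2:ℝ)^s) * Q) * Aux.Nn s (Aux.esup E P) * Aux.Nn t (Aux.esup E A'⁻¹)
          + (ENNReal.ofReal ((2:ℝ)^s) * Q * Aux.Nn t (Aux.esup E P)) *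
            Aux.Nn s (Aux.esup E A'⁻¹) := by ring
      _ ≤ (ENNReal.ofReal ((2:ℝ)^s) * Q) * Aux.Nn s (Aux.esup E P) *
            (2 * Aux.Nn t (Aux.esup E A⁻¹))
          + ENNReal.ofReal 4⁻¹ * Aux.Nn s (Aux.esup E A'⁻¹) :=
          add_le_add (mul_le_mul_right hY2 _) (mul_le_mul_left h14s _)
      _ ≤ 2 * (ENNReal.ofReal ((2:ℝ)^s) * Q) * Aux.Nn s (Aux.esup E P) *
            Aux.Nn t (Aux.esup E A⁻¹)
          + 2⁻¹ * Aux.Nn s (Aux.esup E A'⁻¹) := by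
          apply add_le_add
          · apply le_of_eq; ring
          · exact mul_le_mul_left hofReal4 _
    calc Aux.Nn s (Aux.esup E A⁻¹) + Aux.Nn s (Aux.esup E (P * A'⁻¹))
        ≤ Aux.Nn s (Aux.esup E A⁻¹) +
          (2 * (ENNReal.ofReal ((2:ℝ)^s) * Q) * Aux.Nn s (Aux.esup E P) *
            Aux.Nn t (Aux.esup E A⁻¹) + 2⁻¹ * Aux.Nn s (Aux.esup E A'⁻¹)) :=
          add_le_add_right hmid _
    _ = _ := by rw [add_assoc]
  have hX2 := Aux.cancel_half hXfin hstep2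
  have hK2 : (2:ℝ≥0∞) ≤ ENNReal.ofReal (4*R+2) := by
    calc (2:ℝ≥0∞) = ENNReal.ofReal 2 := by norm_num
    _ ≤ ENNReal.ofReal (4*R+2) := ENNReal.ofReal_le_ofReal (by linarith)
  have hK4 : 4 * (ENNReal.ofReal ((2:ℝ)^s) * Q) ≤ ENNReal.ofReal (4*R+2) := by
    calc 4 * (ENNReal.ofReal ((2:ℝ)^s) * Q)
        = ENNReal.ofReal 4 * (ENNReal.ofReal ((2:ℝ)^s) * ENNReal.ofReal Q.toReal) := by
          rw [← hofQ]; norm_num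
    _ = ENNReal.ofReal (4 * ((2:ℝ)^s * Q.toReal)) := by
          rw [ENNReal.ofReal_mul (by norm_num : (0:ℝ) ≤ 4),
              ENNReal.ofReal_mul (Real.rpow_nonneg (by norm_num) s)]
    _ ≤ ENNReal.ofReal (4*R+2) := ENNReal.ofReal_le_ofReal (by rw [hRdef]; linarith)
  calc Aux.Nn s (Aux.esup E A'⁻¹)
      ≤ 2 * (Aux.Nn s (Aux.esup E A⁻¹) + 2 * (ENNReal.ofReal ((2:ℝ)^s) * Q) *
          Aux.Nn s (Aux.esup E P) * Aux.Nn t (Aux.esup E A⁻¹)) := hX2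
  _ = 2 * Aux.Nn s (Aux.esup E A⁻¹) + 4 * (ENNReal.ofReal ((2:ℝ)^s) * Q) *
        (Aux.Nn s (Aux.esup E P) * Aux.Nn t (Aux.esup E A⁻¹)) := by ring
  _ ≤ ENNReal.ofReal (4*R+2) * Aux.Nn s (Aux.esup E A⁻¹) + ENNReal.ofReal (4*R+2) *
        (Aux.Nn s (Aux.esup E P) * Aux.Nn t (Aux.esup E A⁻¹)) :=
      add_le_add (mul_le_mul_left hK2 _) (mul_le_mul_left hK4 _)
  _ = ENNReal.ofReal (4*R+2) * (Aux.Nn s (Aux.esup E A⁻¹) +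
        Aux.Nn s (Aux.esup E P) * Aux.Nn t (Aux.esup E A⁻¹)) := (mul_add _ _ _).symm
end
end
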